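/- arXiv:1407.8328 — 7 statements merged into one kernel-verified Lean document; each statement's English description precedes it below -/
import Mathlib

section
/- Let X be a compact Hausdorff space, σ a homeomorphism, and x ∈ X an aperiodic point (all σ^n x, n ∈ ℤ, are distinct). Define bounded operators on ℓ¹(ℤ): S is the right shift (S e_k = e_{k+1}), and for f ∈ C(X), M_f is the diagonal operator (M_f ξ)(k) = f(σ^k x) ξ(k). Then for every ρ = Σ_n λ_n e_n ∈ ℓ¹(ℤ) with λ_0 = 1, every τ ∈ ℓ¹(ℤ), and every ε > 0, there exists an element a in the Banach algebra generated by the operators M_f and S^{±1} (given as an absolutely convergent series Σ_n M_{f_n} S^n with Σ_n ‖f_n‖_∞ ≤ ‖τ‖_1) such that ‖τ − a(ρ)‖_1 < ε. -/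
theorem stmt9 {X : Type*} [TopologicalSpace X] [CompactSpace X] [T2Space X]
    (σ : X ≃ₜ X) (x : X)
    (hx : Function.Injective fun n : ℤ => (σ.toEquiv ^ n) x)
    (ρ : lp (fun _ : ℤ => ℂ) 1) (hρ0 : (ρ : ∀ _ : ℤ, ℂ) 0 = 1)
    (τ : lp (fun _ : ℤ => ℂ) 1) (ε : ℝ) (hε : 0 < ε) :
    ∃ f : ℤ → C(X, ℂ), Summable (fun n => ‖f n‖) ∧ (∑' n, ‖f n‖) ≤ ‖τ‖ ∧
      ∃ w : lp (fun _ : ℤ => ℂ) 1,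
        (∀ k : ℤ, (w : ∀ _ : ℤ, ℂ) k
          = ∑' n : ℤ, f n ((σ.toEquiv ^ k) x) * (ρ : ∀ _ : ℤ, ℂ) (k - n)) ∧
        ‖τ - w‖ < ε := by
  classical
  set z : ℤ → X := fun j => (σ.toEquiv ^ j) x with hzdef
  have hzinj : Function.Injective z := hx
  -- summability facts
  have hτs : Summable (fun k : ℤ => ‖(τ : ∀ _ : ℤ, ℂ) k‖) := by
    have := (lp.memℓp τ).summable (p := 1) (by norm_num)
    simpa using this
  have hρs : Summable (fun k : ℤ => ‖(ρ : ∀ _ : ℤ, ℂ) k‖) := by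
    have := (lp.memℓp ρ).summable (p := 1) (by norm_num)
    simpa using this
  have hρsn : ∀ n : ℤ, Summable fun k : ℤ => ‖(ρ : ∀ _ : ℤ, ℂ) (k - n)‖ := fun n =>
    ((Equiv.subRight n).summable_iff (f := fun m => ‖(ρ : ∀ _ : ℤ, ℂ) m‖)).mpr hρs
  set T : ℝ := ∑' k : ℤ, ‖(τ : ∀ _ : ℤ, ℂ) k‖ with hTdef
  have hT0 : 0 ≤ T := tsum_nonneg fun _ => norm_nonneg _
  have hτnorm : ‖τ‖ = T := by
    rw [lp.norm_eq_tsum_rpow (by norm_num) τ]; simp [hTdef]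
  -- tail helper
  have tail : ∀ g : ℤ → ℝ, Summable g → ∀ δ : ℝ, 0 < δ →
      ∃ s : Finset ℤ, (∑' k, g k) - δ < ∑ k ∈ s, g k := by
    intro g hg δ hδ
    exact (hg.hasSum.eventually (eventually_gt_nhds
      (by linarith : (∑' k, g k) - δ < ∑' k, g k))).exists
  -- choose F for τ
  obtain ⟨F, hF⟩ := tail _ hτs (ε / 3) (by linarith)
  -- choose tails for ρ
  set δ' : ℝ := ε / (3 * (T + 1)) with hδ'def
  have hδ' : 0 < δ' := by positivity
  have hsex : ∀ n : ℤ, ∃ s : Finset ℤ,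
      (∑' k, ‖(ρ : ∀ _ : ℤ, ℂ) (k - n)‖) - δ' < ∑ k ∈ s, ‖(ρ : ∀ _ : ℤ, ℂ) (k - n)‖ :=
    fun n => tail _ (hρsn n) δ' hδ'
  choose s hs using hsex
  set K : Finset ℤ := F ∪ F.biUnion s with hKdef
  have hFK : F ⊆ K := Finset.subset_union_left
  have hsK : ∀ n ∈ F, s n ⊆ K := fun n hn =>
    (Finset.subset_biUnion_of_mem s hn).trans Finset.subset_union_right
  -- Urysohn bumps
  have hgex : ∀ n : ℤ, ∃ g : C(X, ℂ),
      ‖g‖ ≤ 1 ∧ g (z n) = 1 ∧ ∀ j ∈ K, j ≠ n → g (z j) = 0 := by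
    intro n
    have hcl : IsClosed (z '' (↑(K.erase n) : Set ℤ)) :=
      (Set.Finite.image z (K.erase n).finite_toSet).isClosed
    have hd : Disjoint (z '' (↑(K.erase n) : Set ℤ)) ({z n} : Set X) := by
      rw [Set.disjoint_singleton_right]
      rintro ⟨j, hj, hj2⟩
      have hj' : j ∈ K.erase n := by exact_mod_cast hj
      exact (Finset.ne_of_mem_erase hj') (hzinj hj2)
    obtain ⟨u, hu0, hu1, hu01⟩ :=
      exists_continuous_zero_one_of_isClosed hcl isClosed_singleton hd
    refine ⟨⟨fun y => (u y : ℂ), Complex.continuous_ofReal.comp u.continuous⟩, ?_, ?_, ?_⟩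
    · rw [ContinuousMap.norm_le _ zero_le_one]
      intro y
      have := hu01 y
      simp only [ContinuousMap.coe_mk, Complex.norm_real, Real.norm_eq_abs]
      rw [abs_of_nonneg this.1]; exact this.2
    · have h1 := hu1 (Set.mem_singleton (z n))
      simp only [ContinuousMap.coe_mk]
      rw [show u (z n) = 1 from h1]; norm_num
    · intro j hj hjn
      have hmem : z j ∈ z '' (↑(K.erase n) : Set ℤ) :=
        ⟨j, Finset.mem_coe.2 (Finset.mem_erase.2 ⟨hjn, hj⟩), rfl⟩
      have h0 := hu0 hmem
      simp only [ContinuousMap.coe_mk]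
      rw [show u (z j) = 0 from h0]; norm_num
  choose g hg1 hg2 hg3 using hgex
  -- the element
  set f : ℤ → C(X, ℂ) := fun n => if n ∈ F then ((τ : ∀ _ : ℤ, ℂ) n) • g n else 0 with hfdef
  have hfle : ∀ n, ‖f n‖ ≤ ‖(τ : ∀ _ : ℤ, ℂ) n‖ := by
    intro n
    by_cases hn : n ∈ F
    · simp only [hfdef, if_pos hn, norm_smul]
      calc ‖(τ : ∀ _ : ℤ, ℂ) n‖ * ‖g n‖ ≤ ‖(τ : ∀ _ : ℤ, ℂ) n‖ * 1 :=
            mul_le_mul_of_nonneg_left (hg1 n) (norm_nonneg _)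
        _ = _ := mul_one _
    · simp [hfdef, hn]
  have hfsum : Summable fun n => ‖f n‖ :=
    Summable.of_nonneg_of_le (fun _ => norm_nonneg _) hfle hτs
  have hfts : (∑' n, ‖f n‖) ≤ ‖τ‖ := by
    rw [hτnorm]; exact Summable.tsum_le_tsum hfle hfsum hτs
  -- the vector w
  set W : ℤ → ℂ := fun k => ∑ n ∈ F, (f n) (z k) * (ρ : ∀ _ : ℤ, ℂ) (k - n) with hWdef
  set B : ℤ → ℝ := fun k => ∑ n ∈ F, ‖(τ : ∀ _ : ℤ, ℂ) n‖ * ‖(ρ : ∀ _ : ℤ, ℂ) (k - n)‖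
    with hBdef
  have hWle : ∀ k, ‖W k‖ ≤ B k := by
    intro k
    refine (norm_sum_le _ _).trans (Finset.sum_le_sum ?_)
    intro n _
    rw [norm_mul]
    exact mul_le_mul_of_nonneg_right
      (((f n).norm_coe_le_norm (z k)).trans (hfle n)) (norm_nonneg _)
  have hBsn : ∀ n : ℤ, Summable fun k : ℤ =>
      ‖(τ : ∀ _ : ℤ, ℂ) n‖ * ‖(ρ : ∀ _ : ℤ, ℂ) (k - n)‖ := fun n => (hρsn n).mul_left _
  have hBs : Summable B := summable_sum fun n _ => hBsn n
  have hWs : Summable fun k => ‖W k‖ :=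
    Summable.of_nonneg_of_le (fun _ => norm_nonneg _) hWle hBs
  have hWmem : Memℓp W 1 := memℓp_gen (by simpa using hWs)
  set w : lp (fun _ : ℤ => ℂ) 1 := ⟨W, hWmem⟩ with hwdef
  have hwcoe : ∀ k, (w : ∀ _ : ℤ, ℂ) k = W k := fun _ => rfl
  refine ⟨f, hfsum, hfts, w, ?_, ?_⟩
  · -- the tsum formula
    intro k
    have hk0 : (w : ∀ _ : ℤ, ℂ) k
        = ∑ n ∈ F, f n ((σ.toEquiv ^ k) x) * (ρ : ∀ _ : ℤ, ℂ) (k - n) := rfl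
    rw [hk0]
    exact (tsum_eq_sum fun n hn => by simp [hfdef, if_neg hn]).symm
  · -- the norm estimate
    have hτws : Summable fun k => ‖(τ : ∀ _ : ℤ, ℂ) k - W k‖ :=
      Summable.of_nonneg_of_le (fun _ => norm_nonneg _)
        (fun k => norm_sub_le _ _) (hτs.add hWs)
    have hnorm : ‖τ - w‖ = ∑' k, ‖(τ : ∀ _ : ℤ, ℂ) k - W k‖ := by
      rw [lp.norm_eq_tsum_rpow (by norm_num) (τ - w)]
      have hco : ∀ k : ℤ, ((τ - w : lp (fun _ : ℤ => ℂ) 1) : ∀ _ : ℤ, ℂ) k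
          = (τ : ∀ _ : ℤ, ℂ) k - W k := by
        intro k; rw [lp.coeFn_sub, Pi.sub_apply, hwcoe k]
      simp [hco]
    -- evaluate W on K
    have hWK : ∀ k ∈ K, W k = if k ∈ F then (τ : ∀ _ : ℤ, ℂ) k else 0 := by
      intro k hk
      by_cases hkF : k ∈ F
      · rw [if_pos hkF]
        show (∑ n ∈ F, (f n) (z k) * (ρ : ∀ _ : ℤ, ℂ) (k - n)) = (τ : ∀ _ : ℤ, ℂ) k
        rw [Finset.sum_eq_single k]
        · simp [hfdef, if_pos hkF, sub_self, hρ0, hg2 k]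
        · intro n hn hnk
          simp [hfdef, if_pos hn, hg3 n k hk (Ne.symm hnk)]
        · intro h; exact absurd hkF h
      · rw [if_neg hkF]
        show (∑ n ∈ F, (f n) (z k) * (ρ : ∀ _ : ℤ, ℂ) (k - n)) = 0
        refine Finset.sum_eq_zero fun n hn => ?_
        have hkn : k ≠ n := fun h => hkF (h ▸ hn)
        simp [hfdef, if_pos hn, hg3 n k hk hkn]
    have hτK : ∑ k ∈ K, ‖(τ : ∀ _ : ℤ, ℂ) k‖ ≤ T :=
      Summable.sum_le_tsum K (fun _ _ => norm_nonneg _) hτs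
    -- Part 1 : sum over K
    have hpart1 : ∑ k ∈ K, ‖(τ : ∀ _ : ℤ, ℂ) k - W k‖ < ε / 3 := by
      have h1 : ∀ k ∈ K, ‖(τ : ∀ _ : ℤ, ℂ) k - W k‖
          = if k ∈ F then 0 else ‖(τ : ∀ _ : ℤ, ℂ) k‖ := by
        intro k hk
        rw [hWK k hk]
        by_cases hkF : k ∈ F <;> simp [hkF]
      rw [Finset.sum_congr rfl h1, ← Finset.sum_sdiff hFK]
      have h2 : ∑ k ∈ F, (if k ∈ F then 0 else ‖(τ : ∀ _ : ℤ, ℂ) k‖) = 0 :=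
        Finset.sum_eq_zero fun k hk => if_pos hk
      have h3 : ∑ k ∈ K \ F, (if k ∈ F then 0 else ‖(τ : ∀ _ : ℤ, ℂ) k‖)
          = ∑ k ∈ K \ F, ‖(τ : ∀ _ : ℤ, ℂ) k‖ :=
        Finset.sum_congr rfl fun k hk => if_neg (Finset.mem_sdiff.1 hk).2
      rw [h2, add_zero, h3]
      have h4 : ∑ k ∈ K \ F, ‖(τ : ∀ _ : ℤ, ℂ) k‖ + ∑ k ∈ F, ‖(τ : ∀ _ : ℤ, ℂ) k‖
          = ∑ k ∈ K, ‖(τ : ∀ _ : ℤ, ℂ) k‖ := Finset.sum_sdiff hFK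
      linarith
    -- complement tsum identity
    have hcompl : ∀ gg : ℤ → ℝ, Summable gg →
        (∑' k : ↑(↑K : Set ℤ)ᶜ, gg ↑k) = (∑' k, gg k) - ∑ k ∈ K, gg k := by
      intro gg hgg
      have := Summable.sum_add_tsum_compl (s := K) hgg
      linarith
    -- Part 2 : tail over complement of K
    have hτtail : (∑' k : ↑(↑K : Set ℤ)ᶜ, ‖(τ : ∀ _ : ℤ, ℂ) ↑k‖) < ε / 3 := by
      rw [hcompl _ hτs]
      have hFle : ∑ k ∈ F, ‖(τ : ∀ _ : ℤ, ℂ) k‖ ≤ ∑ k ∈ K, ‖(τ : ∀ _ : ℤ, ℂ) k‖ :=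
        Finset.sum_le_sum_of_subset_of_nonneg hFK fun _ _ _ => norm_nonneg _
      linarith
    have hρtail : ∀ n ∈ F,
        (∑' k : ↑(↑K : Set ℤ)ᶜ, ‖(ρ : ∀ _ : ℤ, ℂ) (↑k - n)‖) ≤ δ' := by
      intro n hn
      rw [hcompl _ (hρsn n)]
      have h5 : ∑ k ∈ s n, ‖(ρ : ∀ _ : ℤ, ℂ) (k - n)‖
          ≤ ∑ k ∈ K, ‖(ρ : ∀ _ : ℤ, ℂ) (k - n)‖ :=
        Finset.sum_le_sum_of_subset_of_nonneg (hsK n hn) fun _ _ _ => norm_nonneg _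
      have := hs n
      linarith
    have hWtail : (∑' k : ↑(↑K : Set ℤ)ᶜ, ‖W ↑k‖) < ε / 3 := by
      have hle1 : (∑' k : ↑(↑K : Set ℤ)ᶜ, ‖W ↑k‖) ≤ ∑' k : ↑(↑K : Set ℤ)ᶜ, B ↑k :=
        Summable.tsum_le_tsum (fun k => hWle ↑k) (hWs.subtype _) (hBs.subtype _)
      have hle2 : (∑' k : ↑(↑K : Set ℤ)ᶜ, B ↑k)
          = ∑ n ∈ F, ∑' k : ↑(↑K : Set ℤ)ᶜ, ‖(τ : ∀ _ : ℤ, ℂ) n‖ * ‖(ρ : ∀ _ : ℤ, ℂ) (↑k - n)‖ :=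
        Summable.tsum_finsetSum fun n _ => (hBsn n).subtype _
      have hle3 : ∑ n ∈ F, (∑' k : ↑(↑K : Set ℤ)ᶜ, ‖(τ : ∀ _ : ℤ, ℂ) n‖ * ‖(ρ : ∀ _ : ℤ, ℂ) (↑k - n)‖)
          ≤ ∑ n ∈ F, ‖(τ : ∀ _ : ℤ, ℂ) n‖ * δ' := by
        refine Finset.sum_le_sum fun n hn => ?_
        rw [tsum_mul_left]
        exact mul_le_mul_of_nonneg_left (hρtail n hn) (norm_nonneg _)
      have hle4 : ∑ n ∈ F, ‖(τ : ∀ _ : ℤ, ℂ) n‖ * δ' ≤ T * δ' := by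
        rw [← Finset.sum_mul]
        exact mul_le_mul_of_nonneg_right
          (Summable.sum_le_tsum F (fun _ _ => norm_nonneg _) hτs) (le_of_lt hδ')
      have hlt : T * δ' < ε / 3 := by
        rw [hδ'def]
        have hT1 : (T + 1) ≠ 0 := by positivity
        have h6 : T * (ε / (3 * (T + 1))) = ε / 3 * (T / (T + 1)) := by
          field_simp
        have h7 : T / (T + 1) < 1 := (div_lt_one (by linarith)).2 (by linarith)
        calc T * (ε / (3 * (T + 1))) = ε / 3 * (T / (T + 1)) := h6
          _ < ε / 3 * 1 := by
              apply mul_lt_mul_of_pos_left h7 (by linarith)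
          _ = ε / 3 := mul_one _
      calc (∑' k : ↑(↑K : Set ℤ)ᶜ, ‖W ↑k‖) ≤ _ := hle1
        _ = _ := hle2
        _ ≤ _ := hle3
        _ ≤ T * δ' := hle4
        _ < ε / 3 := hlt
    have htail : (∑' k : ↑(↑K : Set ℤ)ᶜ, ‖(τ : ∀ _ : ℤ, ℂ) ↑k - W ↑k‖) < 2 * (ε / 3) := by
      have hle : (∑' k : ↑(↑K : Set ℤ)ᶜ, ‖(τ : ∀ _ : ℤ, ℂ) ↑k - W ↑k‖)
          ≤ ∑' k : ↑(↑K : Set ℤ)ᶜ, (‖(τ : ∀ _ : ℤ, ℂ) ↑k‖ + ‖W ↑k‖) :=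
        Summable.tsum_le_tsum (fun k => norm_sub_le _ _) (hτws.subtype _)
          ((hτs.add hWs).subtype _)
      have heq : (∑' k : ↑(↑K : Set ℤ)ᶜ, (‖(τ : ∀ _ : ℤ, ℂ) ↑k‖ + ‖W ↑k‖))
          = (∑' k : ↑(↑K : Set ℤ)ᶜ, ‖(τ : ∀ _ : ℤ, ℂ) ↑k‖)
            + ∑' k : ↑(↑K : Set ℤ)ᶜ, ‖W ↑k‖ :=
        Summable.tsum_add (hτs.subtype _) (hWs.subtype _)
      rw [heq] at hle
      linarith
    have hsplit := Summable.sum_add_tsum_compl (s := K) hτws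
    rw [hnorm, ← hsplit]
    linarith
end

section
/- Let X be a compact Hausdorff space, σ a homeomorphism, and x ∈ X an aperiodic point. Let ℓ¹(Σ) act on ℓ¹(ℤ) via π¹_x where π¹_x(f) ξ (k) = f(σ^k x) ξ(k) for f ∈ C(X) and π¹_x(δ) is the right shift. Then π¹_x is algebraically irreducible: for every nonzero ρ ∈ ℓ¹(ℤ) and every τ ∈ ℓ¹(ℤ) there exists a ∈ ℓ¹(Σ) with π¹_x(a) ρ = τ. Moreover, for each ε > 0, a can be chosen with ‖a‖ ≤ (1+ε)‖τ‖_1 / max_n |ρ(n)|. -/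
open Filter

private lemma tail_if {f : ℤ → ℝ} (hf : Summable f) (ε : ℝ) (hε : 0 < ε) :
    ∃ s : Finset ℤ, ∑' k, (if k ∈ s then 0 else f k) < ε := by
  have h := tendsto_tsum_compl_atTop_zero f
  obtain ⟨s, hs⟩ := ((tendsto_order.1 h).2 _ hε).exists
  refine ⟨s, ?_⟩
  have key : ∑' k : {k : ℤ // k ∉ s}, f k = ∑' k, (if k ∈ s then 0 else f k) := by
    calc ∑' k : {k : ℤ // k ∉ s}, f k = ∑' k : (((↑s)ᶜ : Set ℤ)), f k := by
          apply tsum_congr_set_coe; ext k; exact Iff.rfl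
      _ = ∑' k, Set.indicator ((↑s : Set ℤ)ᶜ) f k := tsum_subtype _ _
      _ = ∑' k, (if k ∈ s then 0 else f k) := tsum_congr fun k => by
            by_cases h : k ∈ s <;> simp [Set.indicator, h]
  rw [← key]; exact hs

set_option maxHeartbeats 1000000 in
private lemma step10 {X : Type*} [TopologicalSpace X] [CompactSpace X] [T2Space X]
    (σ : X ≃ₜ X) (x : X)
    (hx : Function.Injective fun n : ℤ => (σ.toEquiv ^ n) x)
    (ρf : ℤ → ℂ) (hρs : Summable fun m => ‖ρf m‖) (n₀ : ℤ) (hβ : 0 < ‖ρf n₀‖)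
    (δ : ℝ) (hδ : 0 < δ) (t : ℤ → ℂ) (ht : Summable fun k => ‖t k‖) :
    ∃ (g : ℤ → C(X, ℂ)) (t' : ℤ → ℂ),
      Summable (fun n => ‖g n‖) ∧
      (∑' n, ‖g n‖) ≤ (∑' k, ‖t k‖) / ‖ρf n₀‖ ∧
      Summable (fun k => ‖t' k‖) ∧
      (∑' k, ‖t' k‖) ≤ δ * (∑' k, ‖t k‖) ∧
      ∀ k, HasSum (fun n => (g n) ((σ.toEquiv ^ k) x) * ρf (k - n)) (t k - t' k) := by
  classical
  set β := ‖ρf n₀‖ with hβdef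
  set T := ∑' k, ‖t k‖ with hTdef
  have hT0 : 0 ≤ T := tsum_nonneg fun k => norm_nonneg _
  have hρn₀ : ρf n₀ ≠ 0 := by simpa [hβdef, norm_pos_iff] using hβ
  rcases eq_or_lt_of_le hT0 with hT | hTpos
  · -- T = 0 : then t = 0 and we can take g = 0, t' = 0
    have htz : ∀ k, t k = 0 := by
      intro k
      have := Summable.le_tsum ht k (fun i _ => norm_nonneg _)
      rw [← hTdef, ← hT] at this
      simpa using le_antisymm this (norm_nonneg _)
    refine ⟨0, 0, ?_, ?_, ?_, ?_, ?_⟩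
    · simpa using summable_zero
    · simp only [Pi.zero_apply, norm_zero, tsum_zero]
      rw [← hT, zero_div]
    · simpa using summable_zero
    · simp only [Pi.zero_apply, norm_zero, tsum_zero]
      rw [← hT, mul_zero]
    · intro k
      simpa [htz k] using (hasSum_zero : HasSum (fun _ : ℤ => (0:ℂ)) 0)
  · -- main case
    obtain ⟨K, hK⟩ := tail_if ht (δ/2 * T) (by positivity)
    obtain ⟨F0, hF0⟩ := tail_if hρs (δ/2 * β) (by positivity)
    set F : Finset ℤ := insert n₀ F0 with hFdef
    have hn₀F : n₀ ∈ F := Finset.mem_insert_self _ _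
    have hifF0summ : Summable fun m => (if m ∈ F0 then 0 else ‖ρf m‖) :=
      hρs.of_nonneg_of_le (fun m => by split <;> simp [norm_nonneg])
        (fun m => by split <;> simp [norm_nonneg])
    have hifFsumm : Summable fun m => (if m ∈ F then 0 else ‖ρf m‖) :=
      hρs.of_nonneg_of_le (fun m => by split <;> simp [norm_nonneg])
        (fun m => by split <;> simp [norm_nonneg])
    have hFtail : ∑' m, (if m ∈ F then 0 else ‖ρf m‖) ≤ δ/2 * β := by
      refine le_trans (Summable.tsum_le_tsum (fun m => ?_) hifFsumm hifF0summ) hF0.le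
      by_cases h0 : m ∈ F0
      · simp [hFdef, h0]
      · by_cases h1 : m ∈ F <;> simp [h0, h1, norm_nonneg]
    set S : Finset ℤ := K.image (fun k => k - n₀) with hSdef
    have hSmem : ∀ {k}, k ∈ K → k - n₀ ∈ S := fun hk => Finset.mem_image_of_mem _ hk
    have hKS : ∀ {k}, k - n₀ ∈ S → k ∈ K := by
      intro k hk
      obtain ⟨k', hk', hE⟩ := Finset.mem_image.mp hk
      have : k' = k := by omega
      rwa [← this]
    set pt : ℤ → X := fun j => (σ.toEquiv ^ j) x with hptdef
    have hpt : Function.Injective pt := hx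
    -- bumps
    have hbump : ∀ n : ℤ, ∃ b : C(X, ℝ), b (pt (n + n₀)) = 1 ∧
        (∀ m ∈ F, m ≠ n₀ → b (pt (n + m)) = 0) ∧ ∀ y, b y ∈ Set.Icc (0:ℝ) 1 := by
      intro n
      set s : Set X := (fun m => pt (n + m)) '' (↑(F.erase n₀)) with hsdef
      have hs : IsClosed s := (((F.erase n₀).finite_toSet).image _).isClosed
      have ht' : IsClosed ({pt (n + n₀)} : Set X) := isClosed_singleton
      have hd : Disjoint s {pt (n + n₀)} := by
        rw [Set.disjoint_left]
        rintro a ⟨m, hm, rfl⟩ ha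
        have hmem := Finset.mem_erase.mp (by exact_mod_cast hm)
        have : n + m = n + n₀ := hpt (by simpa using ha)
        exact hmem.1 (by omega)
      obtain ⟨b, hb0, hb1, hbI⟩ := exists_continuous_zero_one_of_isClosed hs ht' hd
      refine ⟨b, by simpa using hb1 rfl, fun m hm hmne => ?_, hbI⟩
      have : pt (n + m) ∈ s := ⟨m, by exact_mod_cast Finset.mem_erase.mpr ⟨hmne, hm⟩, rfl⟩
      simpa using hb0 this
    choose bump hb1 hb0 hbI using hbump
    set cb : ℤ → C(X, ℂ) := fun n =>
      ContinuousMap.mk (fun y => ((bump n y : ℝ) : ℂ))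
        (Complex.continuous_ofReal.comp (bump n).continuous) with hcbdef
    have hcb_apply : ∀ n y, cb n y = ((bump n y : ℝ) : ℂ) := fun n y => rfl
    have hcb_norm : ∀ n y, ‖cb n y‖ ≤ 1 := by
      intro n y
      rw [hcb_apply]
      have := hbI n y
      rw [Complex.norm_real]
      rw [Real.norm_eq_abs, abs_le]
      exact ⟨by linarith [this.1], this.2⟩
    set c : ℤ → ℂ := fun n => t (n + n₀) / ρf n₀ with hcdef
    set g : ℤ → C(X, ℂ) := fun n => if n ∈ S then c n • cb n else 0 with hgdef
    have hg_supp : ∀ n ∉ S, g n = 0 := fun n hn => by simp [hgdef, hn]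
    have hg_norm : ∀ n, ‖g n‖ ≤ ‖t (n + n₀)‖ / β := by
      intro n
      by_cases h : n ∈ S
      · simp only [hgdef, if_pos h]
        rw [norm_smul]
        have hcb1 : ‖cb n‖ ≤ 1 := (ContinuousMap.norm_le _ zero_le_one).mpr (hcb_norm n)
        calc ‖c n‖ * ‖cb n‖ ≤ ‖c n‖ * 1 := by
              exact mul_le_mul_of_nonneg_left hcb1 (norm_nonneg _)
          _ = ‖t (n + n₀)‖ / β := by rw [mul_one, hcdef]; simp [norm_div, hβdef]
      · simp only [hgdef, if_neg h, norm_zero]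
        positivity
    have hg_summ : Summable fun n => ‖g n‖ :=
      summable_of_ne_finset_zero (s := S) (fun n hn => by rw [hg_supp n hn, norm_zero])
    have hsum_image : ∑ n ∈ S, ‖t (n + n₀)‖ = ∑ k ∈ K, ‖t k‖ := by
      rw [hSdef, Finset.sum_image (by intro a _ b _ h; have h' : a - n₀ = b - n₀ := h; omega)]
      exact Finset.sum_congr rfl fun k _ => by rw [sub_add_cancel]
    have hg_tsum : (∑' n, ‖g n‖) ≤ T / β := by
      rw [tsum_eq_sum (s := S) (fun n hn => by rw [hg_supp n hn, norm_zero])]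
      calc ∑ n ∈ S, ‖g n‖ ≤ ∑ n ∈ S, ‖t (n + n₀)‖ / β :=
            Finset.sum_le_sum fun n _ => hg_norm n
        _ = (∑ n ∈ S, ‖t (n + n₀)‖) / β := by rw [Finset.sum_div]
        _ = (∑ k ∈ K, ‖t k‖) / β := by rw [hsum_image]
        _ ≤ T / β := by
            gcongr
            exact Summable.sum_le_tsum K (fun k _ => norm_nonneg _) ht
    set t' : ℤ → ℂ := fun k => t k - ∑ n ∈ S, (g n) (pt k) * ρf (k - n) with ht'def
    have hHS : ∀ k, HasSum (fun n => (g n) ((σ.toEquiv ^ k) x) * ρf (k - n)) (t k - t' k) := by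
      intro k
      have hz : ∀ n ∉ S, (g n) (pt k) * ρf (k - n) = 0 := by
        intro n hn; rw [hg_supp n hn]; simp
      have : HasSum (fun n => (g n) (pt k) * ρf (k - n)) (∑ n ∈ S, (g n) (pt k) * ρf (k - n)) :=
        hasSum_sum_of_ne_finset_zero (s := S) hz
      have heq : t k - t' k = ∑ n ∈ S, (g n) (pt k) * ρf (k - n) := by
        simp only [ht'def]; ring
      rw [heq]
      exact this
    -- pointwise bound on residual
    set B1 : ℤ → ℝ := fun k => if k ∈ K then 0 else ‖t k‖ with hB1def
    set B2 : ℤ → ℝ := fun k =>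
      ∑ n ∈ S, (‖t (n + n₀)‖ / β) * (if (k - n) ∈ F then 0 else ‖ρf (k - n)‖) with hB2def
    have hterm : ∀ k n, n ∈ S → n ≠ k - n₀ →
        ‖(g n) (pt k) * ρf (k - n)‖ ≤
          (‖t (n + n₀)‖ / β) * (if (k - n) ∈ F then 0 else ‖ρf (k - n)‖) := by
      intro k n hnS hne
      by_cases hF : (k - n) ∈ F
      · simp only [if_pos hF, mul_zero]
        have hm : k - n ≠ n₀ := fun h => hne (by omega)
        have hgz : (g n) (pt k) = 0 := by
          simp only [hgdef, if_pos hnS]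
          have hpteq : pt k = pt (n + (k - n)) := by congr 1; omega
          rw [ContinuousMap.smul_apply, hpteq, hcb_apply, hb0 n (k - n) hF hm]
          simp
        rw [hgz, zero_mul, norm_zero]
      · simp only [if_neg hF]
        rw [norm_mul]
        have h1 : ‖(g n) (pt k)‖ ≤ ‖t (n + n₀)‖ / β :=
          le_trans ((g n).norm_coe_le_norm (pt k)) (hg_norm n)
        exact mul_le_mul_of_nonneg_right h1 (norm_nonneg _)
    have hclaim1 : ∀ k, ‖t' k‖ ≤ B1 k + B2 k := by
      intro k
      by_cases hk : k ∈ K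
      · have hmem : k - n₀ ∈ S := hSmem hk
        have hterm0 : (g (k - n₀)) (pt k) * ρf (k - (k - n₀)) = t k := by
          simp only [hgdef, if_pos hmem]
          have hpteq : pt k = pt ((k - n₀) + n₀) := by congr 1; omega
          rw [ContinuousMap.smul_apply, hpteq, hcb_apply, hb1]
          have hkn : k - (k - n₀) = n₀ := by omega
          rw [hkn, hcdef]
          simp only [Complex.ofReal_one, smul_eq_mul, mul_one]
          have : k - n₀ + n₀ = k := by omega
          rw [this, div_mul_cancel₀ _ hρn₀]
        have hsplit : ∑ n ∈ S, (g n) (pt k) * ρf (k - n) =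
            (g (k - n₀)) (pt k) * ρf (k - (k - n₀)) +
              ∑ n ∈ S.erase (k - n₀), (g n) (pt k) * ρf (k - n) :=
          (Finset.add_sum_erase _ _ hmem).symm
        have ht'eq : t' k = -(∑ n ∈ S.erase (k - n₀), (g n) (pt k) * ρf (k - n)) := by
          simp only [ht'def]; rw [hsplit, hterm0]; ring
        rw [ht'eq, norm_neg]
        have hbd : ‖∑ n ∈ S.erase (k - n₀), (g n) (pt k) * ρf (k - n)‖ ≤
            ∑ n ∈ S.erase (k - n₀),
              (‖t (n + n₀)‖ / β) * (if (k - n) ∈ F then 0 else ‖ρf (k - n)‖) := by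
          refine le_trans (norm_sum_le _ _) (Finset.sum_le_sum fun n hn => ?_)
          exact hterm k n (Finset.mem_of_mem_erase hn) (Finset.ne_of_mem_erase hn)
        refine le_trans hbd ?_
        have hB1z : B1 k = 0 := by simp [hB1def, hk]
        rw [hB1z, zero_add]
        simp only [hB2def]
        refine Finset.sum_le_sum_of_subset_of_nonneg (Finset.erase_subset _ _)
          (fun n _ _ => ?_)
        refine mul_nonneg (by positivity) ?_
        split <;> positivity
      · have hkS : k - n₀ ∉ S := fun h => hk (hKS h)
        have h1 : ‖t' k‖ ≤ ‖t k‖ + ‖∑ n ∈ S, (g n) (pt k) * ρf (k - n)‖ :=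
          norm_sub_le _ _
        have h2 : ‖∑ n ∈ S, (g n) (pt k) * ρf (k - n)‖ ≤ B2 k := by
          simp only [hB2def]
          refine le_trans (norm_sum_le _ _) (Finset.sum_le_sum fun n hn => ?_)
          exact hterm k n hn (fun h => hkS (h ▸ hn))
        have hB1e : B1 k = ‖t k‖ := by simp [hB1def, hk]
        rw [hB1e]
        linarith
    -- summability of the bounds
    have hB1sum : Summable B1 :=
      ht.of_nonneg_of_le (fun k => by simp only [hB1def]; split <;> simp [norm_nonneg])
        (fun k => by simp only [hB1def]; split <;> simp [norm_nonneg])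
    have hB2inner : ∀ n : ℤ, Summable fun k => (if (k - n) ∈ F then 0 else ‖ρf (k - n)‖) := by
      intro n
      have : (fun k => (if (k - n) ∈ F then 0 else ‖ρf (k - n)‖)) =
          (fun m => (if m ∈ F then 0 else ‖ρf m‖)) ∘ (Equiv.subRight n) := rfl
      rw [this]
      exact ((Equiv.subRight n).summable_iff).mpr hifFsumm
    have hB2sum : Summable B2 := by
      simp only [hB2def]
      exact summable_sum fun n _ => (hB2inner n).mul_left _
    have hB1tsum : ∑' k, B1 k ≤ δ/2 * T := hK.le
    have hB2tsum : ∑' k, B2 k ≤ δ/2 * T := by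
      simp only [hB2def]
      rw [Summable.tsum_finsetSum (fun n _ => (hB2inner n).mul_left _)]
      have hinner : ∀ n : ℤ, ∑' k, (‖t (n + n₀)‖ / β) *
          (if (k - n) ∈ F then 0 else ‖ρf (k - n)‖) ≤ (‖t (n + n₀)‖ / β) * (δ/2 * β) := by
        intro n
        rw [tsum_mul_left]
        refine mul_le_mul_of_nonneg_left ?_ (by positivity)
        have heq : ∑' k, (if (k - n) ∈ F then 0 else ‖ρf (k - n)‖) =
            ∑' m, (if m ∈ F then 0 else ‖ρf m‖) :=
          (Equiv.subRight n).tsum_eq (fun m => if m ∈ F then 0 else ‖ρf m‖)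
        rw [heq]; exact hFtail
      calc ∑ n ∈ S, ∑' k, (‖t (n + n₀)‖ / β) *
            (if (k - n) ∈ F then 0 else ‖ρf (k - n)‖)
          ≤ ∑ n ∈ S, (‖t (n + n₀)‖ / β) * (δ/2 * β) :=
            Finset.sum_le_sum fun n _ => hinner n
        _ = (∑ n ∈ S, ‖t (n + n₀)‖) * (δ/2) := by
            have hβne : β ≠ 0 := ne_of_gt hβ
            rw [Finset.sum_mul]
            refine Finset.sum_congr rfl fun n _ => ?_
            field_simp
        _ ≤ T * (δ/2) := by
            refine mul_le_mul_of_nonneg_right ?_ (by positivity)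
            rw [hsum_image]
            exact Summable.sum_le_tsum K (fun k _ => norm_nonneg _) ht
        _ = δ/2 * T := by ring
    have ht'sum : Summable fun k => ‖t' k‖ :=
      (hB1sum.add hB2sum).of_nonneg_of_le (fun k => norm_nonneg _) hclaim1
    have ht'tsum : (∑' k, ‖t' k‖) ≤ δ * T := by
      calc (∑' k, ‖t' k‖) ≤ ∑' k, (B1 k + B2 k) :=
            Summable.tsum_le_tsum hclaim1 ht'sum (hB1sum.add hB2sum)
        _ = (∑' k, B1 k) + ∑' k, B2 k := Summable.tsum_add hB1sum hB2sum
        _ ≤ δ/2 * T + δ/2 * T := add_le_add hB1tsum hB2tsum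
        _ = δ * T := by ring
    exact ⟨g, t', hg_summ, hg_tsum, ht'sum, ht'tsum, hHS⟩

set_option maxHeartbeats 1000000 in
theorem stmt10 {X : Type*} [TopologicalSpace X] [CompactSpace X] [T2Space X]
    (σ : X ≃ₜ X) (x : X)
    (hx : Function.Injective fun n : ℤ => (σ.toEquiv ^ n) x)
    (ρ : lp (fun _ : ℤ => ℂ) 1) (hρ : ρ ≠ 0)
    (τ : lp (fun _ : ℤ => ℂ) 1) (ε : ℝ) (hε : 0 < ε) :
    ∃ f : ℤ → C(X, ℂ), Summable (fun n => ‖f n‖) ∧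
      (∑' n, ‖f n‖) ≤ (1 + ε) * ‖τ‖ / (⨆ n : ℤ, ‖(ρ : ∀ _ : ℤ, ℂ) n‖) ∧
      ∀ k : ℤ, HasSum (fun n : ℤ => f n ((σ.toEquiv ^ k) x) * (ρ : ∀ _ : ℤ, ℂ) (k - n))
        ((τ : ∀ _ : ℤ, ℂ) k) := by
  classical
  set ρf : ℤ → ℂ := (ρ : ∀ _ : ℤ, ℂ) with hρfdef
  set τf : ℤ → ℂ := (τ : ∀ _ : ℤ, ℂ) with hτfdef
  have hτHS : HasSum (fun k => ‖τf k‖) ‖τ‖ := by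
    simpa using lp.hasSum_norm (p := 1) (by norm_num) τ
  have hτsum : Summable fun k => ‖τf k‖ := hτHS.summable
  have hτts : (∑' k, ‖τf k‖) = ‖τ‖ := hτHS.tsum_eq
  have hρHS : HasSum (fun m => ‖ρf m‖) ‖ρ‖ := by
    simpa using lp.hasSum_norm (p := 1) (by norm_num) ρ
  have hρsum : Summable fun m => ‖ρf m‖ := hρHS.summable
  set M : ℝ := ⨆ n : ℤ, ‖ρf n‖ with hMdef
  have hbdd : BddAbove (Set.range fun n : ℤ => ‖ρf n‖) := by
    refine ⟨∑' m, ‖ρf m‖, ?_⟩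
    rintro _ ⟨n, rfl⟩
    exact Summable.le_tsum hρsum n fun _ _ => norm_nonneg _
  obtain ⟨n', hn'⟩ : ∃ n', ρf n' ≠ 0 := by
    by_contra h
    push_neg at h
    exact hρ (by ext n; exact h n)
  have hM : 0 < M := lt_of_lt_of_le (norm_pos_iff.mpr hn') (le_ciSup hbdd n')
  set η : ℝ := min (ε/3) 1 with hηdef
  have hη0 : 0 < η := lt_min (by positivity) one_pos
  have hη1 : η ≤ 1 := min_le_right _ _
  have hηε : (1 + η) * (1 + η) ≤ 1 + ε := by
    have h3 : η ≤ ε/3 := min_le_left _ _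
    nlinarith
  obtain ⟨n₀, hn₀⟩ : ∃ n₀, M / (1 + η) < ‖ρf n₀‖ :=
    exists_lt_of_lt_ciSup (by
      have : M / (1 + η) < M := div_lt_self hM (by linarith)
      exact this)
  have hβ : 0 < ‖ρf n₀‖ := lt_of_le_of_lt (by positivity) hn₀
  set β : ℝ := ‖ρf n₀‖ with hβdef
  have hMβ : M ≤ (1 + η) * β := by
    rw [div_lt_iff₀ (by linarith : (0:ℝ) < 1 + η)] at hn₀
    linarith
  set δ : ℝ := η / (1 + η) with hδdef
  have hδ0 : 0 < δ := by positivity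
  have hδ1 : δ < 1 := by
    rw [hδdef, div_lt_one (by linarith)]; linarith
  have h1δ : (1 - δ)⁻¹ = 1 + η := by
    have : 1 - δ = 1 / (1 + η) := by
      rw [hδdef]; field_simp; ring
    rw [this, one_div, inv_inv]
  -- the step, packaged on the subtype of summable-norm sequences
  have step : ∀ t : {u : ℤ → ℂ // Summable fun k => ‖u k‖},
      ∃ (g : ℤ → C(X, ℂ)) (t' : {u : ℤ → ℂ // Summable fun k => ‖u k‖}),
        Summable (fun n => ‖g n‖) ∧
        (∑' n, ‖g n‖) ≤ (∑' k, ‖t.1 k‖) / β ∧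
        (∑' k, ‖t'.1 k‖) ≤ δ * (∑' k, ‖t.1 k‖) ∧
        ∀ k, HasSum (fun n => (g n) ((σ.toEquiv ^ k) x) * ρf (k - n)) (t.1 k - t'.1 k) := by
    intro t
    obtain ⟨g, t', h1, h2, h3, h4, h5⟩ := step10 σ x hx ρf hρsum n₀ hβ δ hδ0 t.1 t.2
    exact ⟨g, ⟨t', h3⟩, h1, h2, h4, h5⟩
  choose G Nf hGsum hGle hNle hHS using step
  set seq : ℕ → {u : ℤ → ℂ // Summable fun k => ‖u k‖} :=
    fun j => Nf^[j] ⟨τf, hτsum⟩ with hseqdef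
  have hseq : ∀ j, seq (j+1) = Nf (seq j) := fun j =>
    Function.iterate_succ_apply' Nf j _
  have hseq0 : seq 0 = ⟨τf, hτsum⟩ := rfl
  have hbound : ∀ j, (∑' k, ‖(seq j).1 k‖) ≤ δ^j * ‖τ‖ := by
    intro j
    induction j with
    | zero =>
        have h0 : (seq 0).1 = τf := rfl
        rw [h0, pow_zero, one_mul]
        exact le_of_eq hτts
    | succ j ih =>
        rw [hseq j]
        calc (∑' k, ‖(Nf (seq j)).1 k‖) ≤ δ * (∑' k, ‖(seq j).1 k‖) := hNle (seq j)
          _ ≤ δ * (δ^j * ‖τ‖) := by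
              exact mul_le_mul_of_nonneg_left ih hδ0.le
          _ = δ^(j+1) * ‖τ‖ := by ring
  have hGb : ∀ j, (∑' n, ‖G (seq j) n‖) ≤ δ^j * ‖τ‖ / β := by
    intro j
    refine le_trans (hGle (seq j)) ?_
    gcongr
    exact hbound j
  have hgeo : Summable fun j : ℕ => δ^j * ‖τ‖ / β := by
    have : (fun j : ℕ => δ^j * ‖τ‖ / β) = fun j : ℕ => δ^j * (‖τ‖ / β) := by
      funext j; ring
    rw [this]
    exact (summable_geometric_of_lt_one hδ0.le hδ1).mul_right _
  set W : ℕ × ℤ → ℝ := fun p => ‖G (seq p.1) p.2‖ with hWdef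
  have hWpos : ∀ p, 0 ≤ W p := fun p => norm_nonneg _
  have hWsum : Summable W := by
    refine (summable_prod_of_nonneg hWpos).mpr ⟨fun j => hGsum (seq j), ?_⟩
    exact hgeo.of_nonneg_of_le
      (fun j => tsum_nonneg fun n => norm_nonneg _) (fun j => hGb j)
  have hfibW : ∀ n : ℤ, Summable fun j => W (j, n) := by
    intro n
    refine hgeo.of_nonneg_of_le (fun j => norm_nonneg _) (fun j => ?_)
    exact le_trans (Summable.le_tsum (hGsum (seq j)) n fun _ _ => norm_nonneg _) (hGb j)
  have hsummf : ∀ n : ℤ, Summable fun j => G (seq j) n := fun n =>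
    Summable.of_norm (hfibW n)
  set f : ℤ → C(X, ℂ) := fun n => ∑' j, G (seq j) n with hfdef
  have hfnorm : ∀ n, ‖f n‖ ≤ ∑' j, W (j, n) := fun n =>
    norm_tsum_le_tsum_norm (hfibW n)
  have hWswap : Summable (fun p : ℤ × ℕ => W (p.2, p.1)) := hWsum.prod_symm
  have hBig : Summable fun n : ℤ => ∑' j, W (j, n) := by
    have := (summable_prod_of_nonneg (f := fun p : ℤ × ℕ => W (p.2, p.1))
      (fun p => hWpos _)).mp hWswap
    exact this.2
  have hfsum : Summable fun n => ‖f n‖ :=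
    hBig.of_nonneg_of_le (fun n => norm_nonneg _) hfnorm
  have hWsumfib : Summable fun j : ℕ => ∑' n, W (j, n) := by
    have := (summable_prod_of_nonneg hWpos).mp hWsum
    exact this.2
  -- the norm estimate
  have hnormest : (∑' n, ‖f n‖) ≤ (1 + ε) * ‖τ‖ / M := by
    have h1 : (∑' n, ‖f n‖) ≤ ∑' n, ∑' j, W (j, n) :=
      Summable.tsum_le_tsum hfnorm hfsum hBig
    have h2 : ∑' n : ℤ, ∑' j : ℕ, W (j, n) = ∑' p : ℕ × ℤ, W p := by
      have ha : ∑' p : ℤ × ℕ, W (p.2, p.1) = ∑' n : ℤ, ∑' j : ℕ, W (j, n) :=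
        Summable.tsum_prod' hWswap (fun n => hfibW n)
      have hb : ∑' p : ℤ × ℕ, W (p.2, p.1) = ∑' p : ℕ × ℤ, W p :=
        (Equiv.prodComm ℤ ℕ).tsum_eq W
      rw [← ha, hb]
    have h3 : ∑' p : ℕ × ℤ, W p = ∑' j : ℕ, ∑' n : ℤ, W (j, n) :=
      Summable.tsum_prod' hWsum (fun j => hGsum (seq j))
    have h4 : ∑' j : ℕ, ∑' n : ℤ, W (j, n) ≤ ∑' j : ℕ, δ^j * ‖τ‖ / β :=
      Summable.tsum_le_tsum (fun j => hGb j) hWsumfib hgeo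
    have h5 : ∑' j : ℕ, δ^j * ‖τ‖ / β = (1 + η) * (‖τ‖ / β) := by
      have heq : (fun j : ℕ => δ^j * ‖τ‖ / β) = fun j : ℕ => δ^j * (‖τ‖ / β) := by
        funext j; ring
      rw [heq, tsum_mul_right, tsum_geometric_of_lt_one hδ0.le hδ1, h1δ]
    have h6 : (1 + η) * (‖τ‖ / β) ≤ (1 + ε) * ‖τ‖ / M := by
      rw [mul_div_assoc', div_le_div_iff₀ hβ hM]
      have e1 : (1 + η) * ‖τ‖ * M ≤ (1 + η) * ‖τ‖ * ((1 + η) * β) := by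
        refine mul_le_mul_of_nonneg_left hMβ ?_
        have := norm_nonneg τ
        nlinarith
      have e3 : ((1 + η) * (1 + η)) * ‖τ‖ * β ≤ (1 + ε) * ‖τ‖ * β := by
        refine mul_le_mul_of_nonneg_right ?_ hβ.le
        exact mul_le_mul_of_nonneg_right hηε (norm_nonneg τ)
      have e2 : (1 + η) * ‖τ‖ * ((1 + η) * β) = ((1 + η) * (1 + η)) * ‖τ‖ * β := by ring
      linarith [e1, e2, e3]
    calc (∑' n, ‖f n‖) ≤ ∑' n, ∑' j, W (j, n) := h1
      _ = ∑' p : ℕ × ℤ, W p := h2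
      _ = ∑' j : ℕ, ∑' n : ℤ, W (j, n) := h3
      _ ≤ ∑' j : ℕ, δ^j * ‖τ‖ / β := h4
      _ = (1 + η) * (‖τ‖ / β) := h5
      _ ≤ (1 + ε) * ‖τ‖ / M := h6
  refine ⟨f, hfsum, hnormest, ?_⟩
  -- the HasSum property
  intro k
  set y : X := (σ.toEquiv ^ k) x with hydef
  set R : ℝ := ∑' m, ‖ρf m‖ with hRdef
  have hR : ∀ m, ‖ρf m‖ ≤ R := fun m => Summable.le_tsum hρsum m fun _ _ => norm_nonneg _
  set A : ℕ × ℤ → ℂ := fun p => G (seq p.1) p.2 y * ρf (k - p.2) with hAdef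
  have hAnorm : ∀ p, ‖A p‖ ≤ W p * R := by
    intro p
    rw [hAdef, norm_mul]
    exact mul_le_mul ((G (seq p.1) p.2).norm_coe_le_norm y) (hR _)
      (norm_nonneg _) (hWpos p)
  have hAsum : Summable A :=
    Summable.of_norm ((hWsum.mul_right R).of_nonneg_of_le
      (fun p => norm_nonneg _) hAnorm)
  have hfibA : ∀ n : ℤ, Summable fun j => A (j, n) := by
    intro n
    refine Summable.of_norm (((hfibW n).mul_right R).of_nonneg_of_le
      (fun j => norm_nonneg _) (fun j => hAnorm (j, n)))
  have hfibAj : ∀ j : ℕ, Summable fun n => A (j, n) := by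
    intro j
    refine Summable.of_norm (((hGsum (seq j)).mul_right R).of_nonneg_of_le
      (fun n => norm_nonneg _) (fun n => hAnorm (j, n)))
  set s : ℕ → ℂ := fun j => (seq j).1 k with hsdef
  have hsb : ∀ j, ‖s j‖ ≤ δ^j * ‖τ‖ := by
    intro j
    exact le_trans (Summable.le_tsum (seq j).2 k fun _ _ => norm_nonneg _) (hbound j)
  have hfibHS : ∀ j, HasSum (fun n => A (j, n)) (s j - s (j+1)) := by
    intro j
    have h := hHS (seq j) k
    rw [← hseq j] at h
    exact h
  have hs0 : Tendsto s atTop (nhds 0) := by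
    have hb : Tendsto (fun j : ℕ => δ^j * ‖τ‖) atTop (nhds 0) := by
      have := (tendsto_pow_atTop_nhds_zero_of_lt_one hδ0.le hδ1).mul_const ‖τ‖
      simpa using this
    exact squeeze_zero_norm hsb hb
  have hdiffsum : Summable fun j => s j - s (j+1) := by
    refine Summable.of_norm ?_
    have hgs : Summable fun j : ℕ => δ^j * ‖τ‖ + δ^(j+1) * ‖τ‖ := by
      have h1 : Summable fun j : ℕ => δ^j * ‖τ‖ :=
        (summable_geometric_of_lt_one hδ0.le hδ1).mul_right _
      have h2 : Summable fun j : ℕ => δ^(j+1) * ‖τ‖ := by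
        have : (fun j : ℕ => δ^(j+1) * ‖τ‖) = fun j : ℕ => δ * (δ^j * ‖τ‖) := by
          funext j; ring
        rw [this]
        exact h1.mul_left δ
      exact h1.add h2
    refine hgs.of_nonneg_of_le (fun j => norm_nonneg _) (fun j => ?_)
    exact le_trans (norm_sub_le _ _) (add_le_add (hsb j) (hsb (j+1)))
  have hdiffHS : HasSum (fun j => s j - s (j+1)) (s 0) := by
    rw [hdiffsum.hasSum_iff_tendsto_nat]
    have heq : (fun n => ∑ i ∈ Finset.range n, (s i - s (i+1))) = fun n => s 0 - s n := by
      funext n; exact Finset.sum_range_sub' s n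
    rw [heq]
    have := tendsto_const_nhds (x := s 0) (f := atTop (α := ℕ)) |>.sub hs0
    simpa using this
  have htsumA : ∑' p, A p = τf k := by
    rw [Summable.tsum_prod' hAsum hfibAj]
    have : (fun j => ∑' n, A (j, n)) = fun j => s j - s (j+1) :=
      funext fun j => (hfibHS j).tsum_eq
    rw [this, hdiffHS.tsum_eq]
    rfl
  have hTsum : Summable fun n : ℤ => f n y * ρf (k - n) := by
    refine Summable.of_norm ((hfsum.mul_right R).of_nonneg_of_le
      (fun n => norm_nonneg _) (fun n => ?_))
    rw [norm_mul]
    exact mul_le_mul ((f n).norm_coe_le_norm y) (hR _) (norm_nonneg _) (norm_nonneg _)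
  have hval : ∑' n, f n y * ρf (k - n) = τf k := by
    have hfy : ∀ n, f n y = ∑' j, (G (seq j) n) y := by
      intro n
      exact ((hsummf n).hasSum.mapL (ContinuousMap.evalCLM ℂ y)).tsum_eq.symm
    have heq : (fun n : ℤ => f n y * ρf (k - n)) = fun n => ∑' j, A (j, n) := by
      funext n
      rw [hfy n, ← tsum_mul_right]
    rw [heq]
    have h2 : ∑' n : ℤ, ∑' j : ℕ, A (j, n) = ∑' p : ℕ × ℤ, A p := by
      have hAswap : Summable (fun p : ℤ × ℕ => A (p.2, p.1)) := hAsum.prod_symm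
      have ha : ∑' p : ℤ × ℕ, A (p.2, p.1) = ∑' n : ℤ, ∑' j : ℕ, A (j, n) :=
        Summable.tsum_prod' hAswap (fun n => hfibA n)
      have hb : ∑' p : ℤ × ℕ, A (p.2, p.1) = ∑' p : ℕ × ℤ, A p :=
        (Equiv.prodComm ℤ ℕ).tsum_eq A
      rw [← ha, hb]
    rw [h2, htsumA]
  exact (hTsum.hasSum_iff).mpr hval
end

section
/- Let x be an aperiodic point of a homeomorphism σ of a compact Hausdorff space X, and let 1 < p ≤ ∞. Consider the representation π^p_x of ℓ¹(Σ) on ℓ^p(ℤ) given by multiplication operators f ↦ (ξ(k) ↦ f(σ^k x) ξ(k)) and the right shift for δ. Then the orbit π^p_x(ℓ¹(Σ)) e_0 of the standard basis vector e_0 equals the canonical copy of ℓ¹(ℤ) inside ℓ^p(ℤ), which is a proper π^p_x-invariant subspace; hence π^p_x is not algebraically irreducible for p > 1. -/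
private lemma mem1_iff {f : ℤ → ℂ} : Memℓp f 1 ↔ Summable fun k => ‖f k‖ := by
  rw [memℓp_gen_iff (by simp : (0:ℝ) < (1 : ENNReal).toReal)]
  simp [Real.rpow_one]

theorem stmt11 {X : Type*} [TopologicalSpace X] [CompactSpace X] [T2Space X]
    (σ : X ≃ₜ X) (x : X)
    (hx : Function.Injective fun n : ℤ => (σ.toEquiv ^ n) x)
    (p : ENNReal) [Fact (1 ≤ p)] (hp : 1 < p) :
    {ξ : lp (fun _ : ℤ => ℂ) p | ∃ f : ℤ → C(X, ℂ), Summable (fun n => ‖f n‖) ∧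
        ∀ k : ℤ, (ξ : ∀ _ : ℤ, ℂ) k = f k ((σ.toEquiv ^ k) x)}
      = {ξ : lp (fun _ : ℤ => ℂ) p | Memℓp (ξ : ∀ _ : ℤ, ℂ) 1} ∧
    {ξ : lp (fun _ : ℤ => ℂ) p | Memℓp (ξ : ∀ _ : ℤ, ℂ) 1} ≠ Set.univ ∧
    (∀ ξ : lp (fun _ : ℤ => ℂ) p, Memℓp (ξ : ∀ _ : ℤ, ℂ) 1 →
      ∀ f : ℤ → C(X, ℂ), Summable (fun n => ‖f n‖) →
      ∀ η : lp (fun _ : ℤ => ℂ) p,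
        (∀ k : ℤ, HasSum (fun n : ℤ => f n ((σ.toEquiv ^ k) x) * (ξ : ∀ _ : ℤ, ℂ) (k - n))
          ((η : ∀ _ : ℤ, ℂ) k)) →
        Memℓp (η : ∀ _ : ℤ, ℂ) 1) := by
  refine ⟨?_, ?_, ?_⟩
  · ext ξ
    simp only [Set.mem_setOf_eq]
    constructor
    · rintro ⟨f, hf, hξ⟩
      rw [mem1_iff]
      refine hf.of_nonneg_of_le (fun k => norm_nonneg _) fun k => ?_
      rw [hξ k]
      exact ContinuousMap.norm_coe_le_norm _ _
    · intro hξ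
      refine ⟨fun n => ContinuousMap.const X ((ξ : ∀ _ : ℤ, ℂ) n), ?_, fun k => rfl⟩
      refine (mem1_iff.mp hξ).of_nonneg_of_le (fun n => norm_nonneg _) fun n => ?_
      exact (ContinuousMap.norm_le _ (norm_nonneg _)).mpr fun y => le_rfl
  · -- properness
    set a : ℤ → ℝ := fun n => ((n.natAbs : ℝ) + 1)⁻¹ with ha
    have ha_nonneg : ∀ n, 0 ≤ a n := fun n => by positivity
    have ha_le_one : ∀ n, a n ≤ 1 := fun n => by
      rw [ha]
      simp only
      rw [inv_le_one_iff₀]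
      right; linarith [Nat.cast_nonneg (α := ℝ) n.natAbs]
    set ξfun : ∀ _ : ℤ, ℂ := fun n => (a n : ℂ) with hξfun
    have hnorm : ∀ n, ‖ξfun n‖ = a n := fun n => by
      rw [hξfun]; simp only [Complex.norm_real]
      exact abs_of_nonneg (ha_nonneg n)
    have hmem : Memℓp ξfun p := by
      rcases eq_or_ne p ⊤ with rfl | hne
      · apply memℓp_infty
        refine ⟨1, ?_⟩
        rintro r ⟨n, rfl⟩
        show ‖ξfun n‖ ≤ 1
        rw [hnorm n]; exact ha_le_one n
      · set q := p.toReal with hq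
        have hq1 : 1 < q := by
          rw [hq, ← ENNReal.toReal_one]
          exact (ENNReal.toReal_lt_toReal (by simp) hne).mpr hp
        apply memℓp_gen
        have h0 : Summable fun n : ℕ => ((n : ℝ)⁻¹) ^ q := by
          refine (Real.summable_nat_rpow_inv.mpr hq1).congr fun n => ?_
          rw [← Real.inv_rpow (by positivity)]
        have h1 : Summable fun n : ℕ => (((n : ℝ) + 1)⁻¹) ^ q := by
          have := (summable_nat_add_iff (f := fun n : ℕ => ((n : ℝ)⁻¹) ^ q) 1).mpr h0
          refine this.congr fun n => ?_
          push_cast; try ring_nf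
        have h2 : Summable fun n : ℕ => (((n : ℝ) + 2)⁻¹) ^ q := by
          have := (summable_nat_add_iff (f := fun n : ℕ => ((n : ℝ)⁻¹) ^ q) 2).mpr h0
          refine this.congr fun n => ?_
          push_cast; try ring_nf
        refine Summable.of_nat_of_neg_add_one ?_ ?_
        · refine h1.congr fun n => ?_
          rw [hnorm]
          simp [ha, hq]
        · refine h2.congr fun n => ?_
          rw [hnorm]
          have : ((-(n + 1) : ℤ)).natAbs = n + 1 := by
            omega
          simp only [ha, this, hq]
          push_cast; ring_nf
    intro hcontra
    have : Memℓp ((⟨ξfun, hmem⟩ : lp (fun _ : ℤ => ℂ) p) : ∀ _ : ℤ, ℂ) 1 := by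
      have := Set.eq_univ_iff_forall.mp hcontra ⟨ξfun, hmem⟩
      exact this
    rw [mem1_iff] at this
    have hsum : Summable fun n : ℤ => a n := by
      refine this.congr fun n => ?_
      exact hnorm n
    have : Summable ((fun n : ℤ => a n) ∘ (Int.ofNat)) :=
      hsum.comp_injective (fun m n h => Int.ofNat.inj h)
    have hnat : Summable fun n : ℕ => ((n : ℝ) + 1)⁻¹ := by
      refine this.congr fun n => ?_
      simp [ha]
    have : Summable fun n : ℕ => ((n : ℝ))⁻¹ := by
      rw [← summable_nat_add_iff 1]
      refine hnat.congr fun n => ?_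
      push_cast; ring_nf
    exact Real.not_summable_natCast_inv this
  · intro ξ hξ f hf η hη
    rw [mem1_iff]
    have hξs : Summable fun k => ‖(ξ : ∀ _ : ℤ, ℂ) k‖ := mem1_iff.mp hξ
    set a : ℤ → ℝ := fun n => ‖f n‖ with ha
    set b : ℤ → ℝ := fun k => ‖(ξ : ∀ _ : ℤ, ℂ) k‖ with hb
    have hprod : Summable fun nk : ℤ × ℤ => a nk.1 * b nk.2 :=
      hf.mul_of_nonneg hξs (fun _ => norm_nonneg _) (fun _ => norm_nonneg _)
    let e : ℤ × ℤ ≃ ℤ × ℤ :=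
      ⟨fun nk => (nk.1, nk.2 - nk.1), fun nk => (nk.1, nk.2 + nk.1),
       fun nk => by simp, fun nk => by simp⟩
    have hprod2 : Summable ((fun nk : ℤ × ℤ => a nk.1 * b nk.2) ∘ e) :=
      e.summable_iff.mpr hprod
    have hprod3 : Summable fun nk : ℤ × ℤ => a nk.2 * b (nk.1 - nk.2) := by
      have := hprod2.prod_symm
      exact this.congr fun nk => rfl
    obtain ⟨hinner, houter⟩ := (summable_prod_of_nonneg (fun nk => by positivity)).mp hprod3
    refine houter.of_nonneg_of_le (fun k => norm_nonneg _) fun k => ?_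
    have hle : ∀ n : ℤ, ‖f n ((σ.toEquiv ^ k) x) * (ξ : ∀ _ : ℤ, ℂ) (k - n)‖
        ≤ a n * b (k - n) := fun n => by
      rw [norm_mul]
      exact mul_le_mul_of_nonneg_right (ContinuousMap.norm_coe_le_norm _ _) (norm_nonneg _)
    have hcs : Summable fun n : ℤ => ‖f n ((σ.toEquiv ^ k) x) * (ξ : ∀ _ : ℤ, ℂ) (k - n)‖ :=
      (hinner k).of_nonneg_of_le (fun n => norm_nonneg _) hle
    calc ‖(η : ∀ _ : ℤ, ℂ) k‖
        = ‖∑' n : ℤ, f n ((σ.toEquiv ^ k) x) * (ξ : ∀ _ : ℤ, ℂ) (k - n)‖ := by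
          rw [(hη k).tsum_eq]
      _ ≤ ∑' n : ℤ, ‖f n ((σ.toEquiv ^ k) x) * (ξ : ∀ _ : ℤ, ℂ) (k - n)‖ :=
          norm_tsum_le_tsum_norm hcs
      _ ≤ ∑' n : ℤ, a n * b (k - n) := Summable.tsum_le_tsum hle hcs (hinner k)
end

section
/- Let x be an aperiodic point of a homeomorphism σ of a compact Hausdorff space X and let 1 ≤ p < ∞. Then the representation π^p_x of ℓ¹(Σ) on ℓ^p(ℤ) (C(X) acting diagonally via k ↦ f(σ^k x) and δ acting by the right shift) is topologically irreducible: every nonzero closed subspace L ⊆ ℓ^p(ℤ) invariant under all π^p_x(a), a ∈ ℓ¹(Σ), equals ℓ^p(ℤ). -/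
private lemma aux_memℓp_of_le {p : ENNReal} [Fact (1 ≤ p)] (hp : p ≠ ⊤)
    {f : ℤ → ℂ} {g : lp (fun _ : ℤ => ℂ) p} (h : ∀ k, ‖f k‖ ≤ ‖(g : ∀ _ : ℤ, ℂ) k‖) :
    Memℓp f p := by
  have hp0 : p ≠ 0 := (lt_of_lt_of_le one_pos (Fact.out : (1:ENNReal) ≤ p)).ne'
  have hpt : 0 < p.toReal := ENNReal.toReal_pos hp0 hp
  exact memℓp_gen <| Summable.of_nonneg_of_le
    (fun k => Real.rpow_nonneg (norm_nonneg _) _)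
    (fun k => Real.rpow_le_rpow (norm_nonneg _) (h k) hpt.le)
    ((lp.memℓp g).summable hpt)

private lemma aux_norm_le_of_le {p : ENNReal} [Fact (1 ≤ p)] (hp : p ≠ ⊤)
    (a b : lp (fun _ : ℤ => ℂ) p)
    (h : ∀ k, ‖(a : ∀ _ : ℤ, ℂ) k‖ ≤ ‖(b : ∀ _ : ℤ, ℂ) k‖) : ‖a‖ ≤ ‖b‖ := by
  have hp0 : p ≠ 0 := (lt_of_lt_of_le one_pos (Fact.out : (1:ENNReal) ≤ p)).ne'
  have hpt : 0 < p.toReal := ENNReal.toReal_pos hp0 hp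
  have := hasSum_le (fun k => Real.rpow_le_rpow (norm_nonneg _) (h k) hpt.le)
    (lp.hasSum_norm hpt a) (lp.hasSum_norm hpt b)
  exact (Real.rpow_le_rpow_iff (lp.norm_nonneg' a) (lp.norm_nonneg' b) hpt).mp this

theorem stmt12 {X : Type*} [TopologicalSpace X] [CompactSpace X] [T2Space X]
    (σ : X ≃ₜ X) (x : X)
    (hx : Function.Injective fun n : ℤ => (σ.toEquiv ^ n) x)
    (p : ENNReal) [Fact (1 ≤ p)] (hp : p ≠ ⊤)
    (L : Submodule ℂ (lp (fun _ : ℤ => ℂ) p))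
    (hLc : IsClosed (L : Set (lp (fun _ : ℤ => ℂ) p))) (hL0 : L ≠ ⊥)
    (hinv : ∀ f : ℤ → C(X, ℂ), Summable (fun n => ‖f n‖) →
      ∀ ξ ∈ L, ∀ η : lp (fun _ : ℤ => ℂ) p,
        (∀ k : ℤ, HasSum (fun n : ℤ => f n ((σ.toEquiv ^ k) x) * (ξ : ∀ _ : ℤ, ℂ) (k - n))
          ((η : ∀ _ : ℤ, ℂ) k)) → η ∈ L) :
    L = ⊤ := by
  classical
  have hp0 : p ≠ 0 := (lt_of_lt_of_le one_pos (Fact.out : (1:ENNReal) ≤ p)).ne'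
  have hpt : 0 < p.toReal := ENNReal.toReal_pos hp0 hp
  -- get a nonzero element of L and a nonzero coordinate
  obtain ⟨ξ, hξL, hξ0⟩ := Submodule.exists_mem_ne_zero_of_ne_bot hL0
  obtain ⟨k₀, hk₀⟩ : ∃ k : ℤ, (ξ : ∀ _ : ℤ, ℂ) k ≠ 0 := by
    by_contra h
    push_neg at h
    exact hξ0 (lp.ext (funext h))
  -- shift invariance for single basis vectors
  have shift : ∀ (d m : ℤ) (c : ℂ), lp.single p m c ∈ L → lp.single p (m + d) c ∈ L := by
    intro d m c hm
    refine hinv (fun n => if n = d then ContinuousMap.const X 1 else 0)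
      (summable_of_ne_finset_zero (s := {d}) ?_) _ hm (lp.single p (m + d) c) ?_
    · intro n hn
      simp only [Finset.mem_singleton] at hn
      simp [if_neg hn]
    · intro k
      have h0 : ∀ n : ℤ, n ≠ d →
          (if n = d then ContinuousMap.const X 1 else 0) ((σ.toEquiv ^ k) x) *
            (lp.single p m c : ∀ _ : ℤ, ℂ) (k - n) = 0 := by
        intro n hn; simp [if_neg hn]
      have H := hasSum_single (f := fun n : ℤ =>
        (if n = d then ContinuousMap.const X 1 else 0) ((σ.toEquiv ^ k) x) *
          (lp.single p m c : ∀ _ : ℤ, ℂ) (k - n)) d h0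
      have hval : (if d = d then ContinuousMap.const X 1 else 0) ((σ.toEquiv ^ k) x) *
          (lp.single p m c : ∀ _ : ℤ, ℂ) (k - d) =
          (lp.single p (m + d) c : ∀ _ : ℤ, ℂ) k := by
        rw [if_pos rfl]
        by_cases hk : k = m + d
        · subst hk
          rw [show m + d - d = m from by omega, lp.single_apply_self, lp.single_apply_self]
          simp
        · rw [lp.single_apply_ne (E := fun _ : ℤ => ℂ) p m c (show k - d ≠ m from by omega),
            lp.single_apply_ne (E := fun _ : ℤ => ℂ) p (m + d) c hk]
          simp
      rw [← hval]
      exact H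
  -- isolation: lp.single p k₀ (ξ k₀) ∈ L
  have hsingle : lp.single p k₀ ((ξ : ∀ _ : ℤ, ℂ) k₀) ∈ L := by
    have hcl : lp.single p k₀ ((ξ : ∀ _ : ℤ, ℂ) k₀) ∈
        closure (L : Set (lp (fun _ : ℤ => ℂ) p)) := by
      rw [Metric.mem_closure_iff]
      intro ε hε
      -- find a finite set capturing most of ξ
      have hHS := lp.hasSum_single hp ξ
      rw [HasSum, Metric.tendsto_nhds] at hHS
      obtain ⟨F₀, hF₀⟩ := Filter.eventually_atTop.mp (hHS ε hε)
      set F : Finset ℤ := insert k₀ F₀ with hFdef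
      have hk₀F : k₀ ∈ F := Finset.mem_insert_self _ _
      have hFd : dist (∑ i ∈ F, lp.single p i ((ξ : ∀ _ : ℤ, ℂ) i)) ξ < ε :=
        hF₀ F (Finset.le_iff_subset.mpr (Finset.subset_insert _ _))
      -- coordinates of the partial sum
      have hsum_coord : ∀ k : ℤ,
          ((∑ i ∈ F, lp.single p i ((ξ : ∀ _ : ℤ, ℂ) i) : lp (fun _ : ℤ => ℂ) p) :
            ∀ _ : ℤ, ℂ) k = if k ∈ F then (ξ : ∀ _ : ℤ, ℂ) k else 0 := by
        intro k
        rw [lp.coeFn_sum, Finset.sum_apply]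
        have : ∀ i ∈ F, (lp.single p i ((ξ : ∀ _ : ℤ, ℂ) i) : ∀ _ : ℤ, ℂ) k =
            if k = i then (ξ : ∀ _ : ℤ, ℂ) i else 0 := by
          intro i _
          by_cases h : k = i
          · subst h; simp [lp.single_apply_self]
          · simp [lp.single_apply_ne _ _ _ h, h]
        rw [Finset.sum_congr rfl this, Finset.sum_ite_eq F k (fun i => (ξ : ∀ _ : ℤ, ℂ) i)]
      -- Urysohn function
      set s : Set X := (fun k : ℤ => (σ.toEquiv ^ k) x) '' ((F.erase k₀ : Finset ℤ) : Set ℤ)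
        with hs_def
      have hs : IsClosed s := (Set.Finite.image _ (Finset.finite_toSet _)).isClosed
      have ht : IsClosed ({(σ.toEquiv ^ k₀) x} : Set X) := isClosed_singleton
      have hdisj : Disjoint s ({(σ.toEquiv ^ k₀) x} : Set X) := by
        rw [Set.disjoint_singleton_right]
        rintro ⟨k, hk, hke⟩
        have hkk : k = k₀ := hx hke
        rw [Finset.mem_coe, Finset.mem_erase] at hk
        exact hk.1 hkk
      obtain ⟨g, hg0, hg1, hg01⟩ := exists_continuous_zero_one_of_isClosed hs ht hdisj
      set gC : C(X, ℂ) := ⟨fun y => (g y : ℂ), Complex.continuous_ofReal.comp g.continuous⟩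
        with hgC_def
      have hgC_le : ∀ y, ‖gC y‖ ≤ 1 := by
        intro y
        have h01 := hg01 y
        rw [Set.mem_Icc] at h01
        simp only [hgC_def, ContinuousMap.coe_mk, Complex.norm_real, Real.norm_eq_abs]
        rw [abs_le]
        exact ⟨by linarith [h01.1], h01.2⟩
      -- the multiplied element
      have hbound : ∀ k : ℤ, ‖gC ((σ.toEquiv ^ k) x) * (ξ : ∀ _ : ℤ, ℂ) k‖ ≤
          ‖(ξ : ∀ _ : ℤ, ℂ) k‖ := by
        intro k
        rw [norm_mul]
        calc ‖gC ((σ.toEquiv ^ k) x)‖ * ‖(ξ : ∀ _ : ℤ, ℂ) k‖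
            ≤ 1 * ‖(ξ : ∀ _ : ℤ, ℂ) k‖ :=
              mul_le_mul_of_nonneg_right (hgC_le _) (norm_nonneg _)
          _ = ‖(ξ : ∀ _ : ℤ, ℂ) k‖ := one_mul _
      have hmem : Memℓp (fun k : ℤ => gC ((σ.toEquiv ^ k) x) * (ξ : ∀ _ : ℤ, ℂ) k) p :=
        aux_memℓp_of_le hp (g := ξ) hbound
      set η : lp (fun _ : ℤ => ℂ) p :=
        ⟨fun k => gC ((σ.toEquiv ^ k) x) * (ξ : ∀ _ : ℤ, ℂ) k, hmem⟩ with hη_def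
      have hη_coord : ∀ k : ℤ, (η : ∀ _ : ℤ, ℂ) k = gC ((σ.toEquiv ^ k) x) *
          (ξ : ∀ _ : ℤ, ℂ) k := fun k => rfl
      have hηL : η ∈ L := by
        refine hinv (fun n => if n = 0 then gC else 0)
          (summable_of_ne_finset_zero (s := {0}) ?_) ξ hξL η ?_
        · intro n hn
          simp only [Finset.mem_singleton] at hn
          simp [if_neg hn]
        · intro k
          have h0 : ∀ n : ℤ, n ≠ 0 →
              (if n = 0 then gC else 0) ((σ.toEquiv ^ k) x) * (ξ : ∀ _ : ℤ, ℂ) (k - n) = 0 := by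
            intro n hn; simp [if_neg hn]
          have H := hasSum_single (f := fun n : ℤ =>
            (if n = 0 then gC else 0) ((σ.toEquiv ^ k) x) * (ξ : ∀ _ : ℤ, ℂ) (k - n)) 0 h0
          have hval : (if (0:ℤ) = 0 then gC else 0) ((σ.toEquiv ^ k) x) *
              (ξ : ∀ _ : ℤ, ℂ) (k - 0) = (η : ∀ _ : ℤ, ℂ) k := by
            rw [if_pos rfl, sub_zero, hη_coord k]
          rw [← hval]
          exact H
      refine ⟨η, hηL, ?_⟩
      rw [dist_eq_norm]
      refine lt_of_le_of_lt
        (aux_norm_le_of_le hp _ (∑ i ∈ F, lp.single p i ((ξ : ∀ _ : ℤ, ℂ) i) - ξ) ?_)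
        ?_
      · intro k
        have hrhs : (((∑ i ∈ F, lp.single p i ((ξ : ∀ _ : ℤ, ℂ) i)) - ξ :
            lp (fun _ : ℤ => ℂ) p) : ∀ _ : ℤ, ℂ) k =
            (if k ∈ F then (ξ : ∀ _ : ℤ, ℂ) k else 0) - (ξ : ∀ _ : ℤ, ℂ) k := by
          rw [lp.coeFn_sub, Pi.sub_apply, hsum_coord]
        have hlhs : ((lp.single p k₀ ((ξ : ∀ _ : ℤ, ℂ) k₀) - η :
            lp (fun _ : ℤ => ℂ) p) : ∀ _ : ℤ, ℂ) k =
            (lp.single p k₀ ((ξ : ∀ _ : ℤ, ℂ) k₀) : ∀ _ : ℤ, ℂ) k -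
              gC ((σ.toEquiv ^ k) x) * (ξ : ∀ _ : ℤ, ℂ) k := by
          rw [lp.coeFn_sub, Pi.sub_apply, hη_coord]
        rw [hlhs, hrhs]
        by_cases hkF : k ∈ F
        · rw [if_pos hkF, sub_self, norm_zero]
          by_cases hk : k = k₀
          · subst hk
            have hgval : gC ((σ.toEquiv ^ k) x) = 1 := by
              have := hg1 (Set.mem_singleton _)
              simp only [hgC_def, ContinuousMap.coe_mk]
              rw [show g ((σ.toEquiv ^ k) x) = 1 from this]
              norm_num
            rw [lp.single_apply_self, hgval, one_mul, sub_self, norm_zero]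
          · have hgval : gC ((σ.toEquiv ^ k) x) = 0 := by
              have hmem_s : (σ.toEquiv ^ k) x ∈ s := by
                rw [hs_def]
                exact ⟨k, by rw [Finset.mem_coe, Finset.mem_erase]; exact ⟨hk, hkF⟩, rfl⟩
              have := hg0 hmem_s
              simp only [hgC_def, ContinuousMap.coe_mk]
              rw [show g ((σ.toEquiv ^ k) x) = 0 from this]
              norm_num
            rw [lp.single_apply_ne _ _ _ hk, hgval, zero_mul, sub_self, norm_zero]
        · have hk : k ≠ k₀ := fun h => hkF (h ▸ hk₀F)
          rw [if_neg hkF, lp.single_apply_ne _ _ _ hk, zero_sub, zero_sub, norm_neg, norm_neg]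
          exact hbound k
      · rwa [dist_eq_norm] at hFd
    rwa [hLc.closure_eq] at hcl
  -- lp.single p k₀ 1 ∈ L
  have h1 : lp.single p k₀ ((ξ : ∀ _ : ℤ, ℂ) k₀) =
      ((ξ : ∀ _ : ℤ, ℂ) k₀) • lp.single (E := fun _ : ℤ => ℂ) p k₀ (1 : ℂ) := by
    rw [← lp.single_smul, smul_eq_mul, mul_one]
  have he : lp.single (E := fun _ : ℤ => ℂ) p k₀ (1 : ℂ) ∈ L := by
    have := L.smul_mem (((ξ : ∀ _ : ℤ, ℂ) k₀)⁻¹) hsingle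
    rwa [h1, inv_smul_smul₀ hk₀] at this
  -- all singles are in L
  have hall : ∀ (m : ℤ) (c : ℂ), lp.single p m c ∈ L := by
    intro m c
    have hm1 : lp.single (E := fun _ : ℤ => ℂ) p m (1 : ℂ) ∈ L := by
      have := shift (m - k₀) k₀ 1 he
      rwa [add_sub_cancel] at this
    have : lp.single p m c = c • lp.single (E := fun _ : ℤ => ℂ) p m (1 : ℂ) := by
      rw [← lp.single_smul, smul_eq_mul, mul_one]
    rw [this]
    exact L.smul_mem c hm1
  -- conclude
  rw [Submodule.eq_top_iff']
  intro η
  have hcl : η ∈ closure (L : Set (lp (fun _ : ℤ => ℂ) p)) := by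
    refine mem_closure_of_tendsto (lp.hasSum_single hp η) ?_
    filter_upwards with F
    exact Submodule.sum_mem L fun i _ => hall i _
  rwa [hLc.closure_eq] at hcl
end

section
/- Let x be an aperiodic point of a homeomorphism σ of a compact Hausdorff space X, let p ∈ [1,∞], and let a = Σ_n f_n δ^n ∈ ℓ¹(Σ). Then π^p_x(a) = 0 if and only if every coefficient function f_n vanishes on the closure of the orbit {σ^k x : k ∈ ℤ}. In particular, Ker(π^p_x) does not depend on p and is a selfadjoint closed ideal of ℓ¹(Σ). -/
theorem stmt14 {X : Type*} [TopologicalSpace X] [CompactSpace X] [T2Space X]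
    (σ : X ≃ₜ X) (x : X)
    (hx : Function.Injective fun n : ℤ => (σ.toEquiv ^ n) x)
    (p : ENNReal) [Fact (1 ≤ p)]
    (f : ℤ → C(X, ℂ)) (hf : Summable fun n => ‖f n‖) :
    (∀ ξ : lp (fun _ : ℤ => ℂ) p, ∀ k : ℤ,
        (∑' n : ℤ, f n ((σ.toEquiv ^ k) x) * (ξ : ∀ _ : ℤ, ℂ) (k - n)) = 0)
      ↔ ∀ n : ℤ, ∀ y ∈ closure (Set.range fun k : ℤ => (σ.toEquiv ^ k) x),
          f n y = 0 := by
  constructor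
  · intro h n y hy
    -- first show f n vanishes on the orbit
    have horb : ∀ k : ℤ, f n ((σ.toEquiv ^ k) x) = 0 := by
      intro k
      have := h (lp.single p (k - n) 1) k
      rwa [tsum_eq_single n (by
        intro m hm
        rw [lp.single_apply_ne p (k - n) _ (by omega), mul_zero]), lp.single_apply_self,
        mul_one] at this
    have hclosed : closure (Set.range fun k : ℤ => (σ.toEquiv ^ k) x) ⊆ (f n) ⁻¹' {0} := by
      apply closure_minimal
      · rintro _ ⟨k, rfl⟩
        exact horb k
      · exact (isClosed_singleton.preimage (f n).continuous)
    exact hclosed hy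
  · intro h ξ k
    have : ∀ m : ℤ, f m ((σ.toEquiv ^ k) x) * (ξ : ∀ _ : ℤ, ℂ) (k - m) = 0 := by
      intro m
      rw [h m _ (subset_closure ⟨k, rfl⟩), zero_mul]
    simp [this]
end

section
/- Let p ≥ 1 be an integer, F ⊊ 𝕋 a proper closed subset of the unit circle, and λ_0 ∈ 𝕋 \ F. Then there exists a sequence (c_n) ∈ ℓ¹(ℤ) such that Σ_n λ^n c_n = 0 for all λ ∈ F and Σ_n λ_0^n c_n = 1. -/
open Real Set Function MeasureTheory intervalIntegral
open scoped Real

lemma aux_norm_exp_sub (x y : ℝ) :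
    ‖Complex.exp (x * Complex.I) - Complex.exp (y * Complex.I)‖ ^ 2 = 2 - 2 * Real.cos (x - y) := by
  simp only [Complex.sq_norm, Complex.normSq_apply, Complex.sub_re,
    Complex.sub_im, Complex.exp_ofReal_mul_I_re, Complex.exp_ofReal_mul_I_im, Real.cos_sub]
  nlinarith [Real.sin_sq_add_cos_sq x, Real.sin_sq_add_cos_sq y]

lemma aux_key (g : ℝ → ℝ) (hg : ContDiff ℝ ((⊤:ℕ∞)) g) (hper : Function.Periodic g (2 * π)) :
    ∃ c : ℤ → ℂ, Summable (fun n => ‖c n‖) ∧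
      ∀ θ : ℝ, HasSum (fun n : ℤ => Complex.exp (θ * Complex.I) ^ n * c n) ((g θ : ℂ)) := by
  haveI hT : Fact (0 < 2 * π) := ⟨by positivity⟩
  set fc : ℝ → ℂ := fun x => (g x : ℂ) with hfc_def
  have hfc : ContDiff ℝ ((⊤:ℕ∞)) fc := Complex.ofRealCLM.contDiff.comp hg
  have hperc : Function.Periodic fc (2 * π) := fun x => by simp [hfc_def, hper x]
  set G : AddCircle (2 * π) → ℂ := hperc.lift with hG_def
  have hGcont : Continuous G := by
    rw [(QuotientAddGroup.isQuotientMap_mk _).continuous_iff]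
    exact hfc.continuous
  set Gc : C(AddCircle (2 * π), ℂ) := ⟨G, hGcont⟩ with hGc_def
  have hab : (0 : ℝ) < 0 + 2 * π := by positivity
  -- liftIoc agrees with the periodic lift
  have hlift : AddCircle.liftIoc (2 * π) 0 fc = G := by
    funext z
    refine QuotientAddGroup.induction_on z (fun x => ?_)
    have hy : ((toIocMod hT.out 0 x : ℝ) : AddCircle (2 * π)) = (x : AddCircle (2 * π)) := by
      rw [QuotientAddGroup.eq_iff_sub_mem, toIocMod_sub_self]
      exact AddSubgroup.zsmul_mem_zmultiples _ _
    rw [← hy, AddCircle.liftIoc_coe_apply (toIocMod_mem_Ioc hT.out 0 x)]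
    rfl
  have hcoeff : ∀ n : ℤ, fourierCoeff (⇑Gc) n = fourierCoeffOn hab fc n := by
    intro n
    rw [hGc_def]
    show fourierCoeff G n = _
    rw [← hlift, fourierCoeff_liftIoc_eq]
  have hstep : ∀ (h : ℝ → ℂ), ContDiff ℝ ((⊤:ℕ∞)) h → Function.Periodic h (2 * π) → ∀ n : ℤ, n ≠ 0 →
      ‖fourierCoeffOn hab h n‖ = ‖fourierCoeffOn hab (deriv h) n‖ / |(n : ℝ)| := by
    intro h hh hp n hn
    rw [fourierCoeffOn_of_hasDerivAt hab hn
      (fun x _ => (hh.differentiable (by simp) x).hasDerivAt)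
      ((hh.continuous_deriv (by exact_mod_cast le_top)).intervalIntegrable _ _)]
    have h0 : h (0 + 2 * π) - h 0 = 0 := sub_eq_zero_of_eq (hp 0)
    rw [h0, mul_zero, zero_sub, norm_mul, norm_neg, norm_mul]
    simp only [norm_div, norm_one, norm_mul, Complex.norm_I,
      Complex.norm_real, Real.norm_eq_abs, Complex.norm_intCast, norm_neg, Complex.norm_two]
    rw [← Complex.ofReal_sub, Complex.norm_real, Real.norm_eq_abs, abs_of_pos Real.pi_pos,
      abs_of_pos (by simp; positivity : (0:ℝ) < 0 + 2 * π - 0)]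
    have hn' : (0:ℝ) < |(n:ℝ)| := by
      simp [abs_pos, hn]
    field_simp
    ring
  set g1 : ℝ → ℂ := deriv fc with hg1_def
  set g2 : ℝ → ℂ := deriv g1 with hg2_def
  have hfc1 : ContDiff ℝ ((⊤:ℕ∞)) g1 := (contDiff_infty_iff_deriv.mp hfc).2
  have hfc2cont : Continuous g2 := hfc1.continuous_deriv (by exact_mod_cast le_top)
  have hper1 : Function.Periodic g1 (2 * π) := by
    intro x
    rw [hg1_def]
    rw [show deriv fc (x + 2 * π) = deriv (fun y => fc (y + 2 * π)) x from
      (deriv_comp_add_const _ _ _).symm]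
    congr 1
    funext y
    exact hperc y
  obtain ⟨M, hM⟩ := (isCompact_uIcc (a := (0:ℝ)) (b := 0 + 2 * π)).exists_bound_of_continuousOn
      hfc2cont.continuousOn
  have hg2b : ∀ n : ℤ, ‖fourierCoeffOn hab g2 n‖ ≤ max M 0 := by
    intro n
    rw [fourierCoeffOn_eq_integral, norm_smul]
    have hInt : ‖∫ x in (0:ℝ)..(0 + 2 * π), fourier (-n) (x : AddCircle (0 + 2 * π - 0)) • g2 x‖
        ≤ (max M 0) * |0 + 2 * π - 0| := by
      apply intervalIntegral.norm_integral_le_of_norm_le_const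
      intro x hx
      rw [norm_smul]
      have h1 : ‖(fourier (-n) (x : AddCircle (0 + 2 * π - 0)) : ℂ)‖ = 1 := by
        rw [fourier_apply, Circle.norm_coe]
      rw [h1, one_mul]
      exact le_max_of_le_left (hM x (uIoc_subset_uIcc hx))
    calc ‖(1 / (0 + 2 * π - 0) : ℝ)‖ * ‖∫ x in (0:ℝ)..(0 + 2 * π),
          fourier (-n) (x : AddCircle (0 + 2 * π - 0)) • g2 x‖
        ≤ ‖(1 / (0 + 2 * π - 0) : ℝ)‖ * ((max M 0) * |0 + 2 * π - 0|) := by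
          gcongr
      _ = max M 0 := by
          rw [Real.norm_eq_abs]
          rw [abs_of_pos (by simp; positivity : (0:ℝ) < 1 / (0 + 2 * π - 0)),
            abs_of_pos (by simp; positivity : (0:ℝ) < 0 + 2 * π - 0)]
          field_simp
  set c : ℤ → ℂ := fun n => fourierCoeff (⇑Gc) n with hc_def
  have hbound : ∀ n : ℤ, n ≠ 0 → ‖c n‖ ≤ max M 0 / (n : ℝ) ^ 2 := by
    intro n hn
    rw [hc_def]
    simp only
    rw [hcoeff n, hstep fc hfc hperc n hn, hstep g1 hfc1 hper1 n hn, div_div,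
      abs_mul_abs_self, ← pow_two]
    have h2 : (0:ℝ) < (n : ℝ) ^ 2 := by positivity
    gcongr
    exact hg2b n
  have hsumnorm : Summable (fun n : ℤ => ‖c n‖) := by
    have hs2 : Summable (fun n : ℤ => max M 0 / (n : ℝ) ^ 2) := by
      have h1 := (Real.summable_one_div_int_pow (p := 2)).mpr one_lt_two
      exact (h1.mul_left (max M 0)).congr fun n => by rw [mul_one_div]
    apply Summable.of_norm_bounded_eventually hs2
    rw [Filter.eventually_cofinite]
    apply Set.Finite.subset (Set.finite_singleton (0 : ℤ))
    intro n hn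
    simp only [Set.mem_setOf_eq, Real.norm_eq_abs, abs_norm] at hn
    by_contra h0
    exact hn (hbound n (by simpa using h0))
  refine ⟨c, hsumnorm, fun θ => ?_⟩
  have hsumc : Summable (fourierCoeff (⇑Gc)) := by
    apply Summable.of_norm
    exact hsumnorm
  have hpt := has_pointwise_sum_fourier_series_of_summable hsumc ((θ : ℝ) : AddCircle (2 * π))
  have hval : Gc ((θ : ℝ) : AddCircle (2 * π)) = (g θ : ℂ) := rfl
  rw [hval] at hpt
  have hfun : (fun n : ℤ => Complex.exp (θ * Complex.I) ^ n * c n)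
      = fun n : ℤ => fourierCoeff (⇑Gc) n • fourier n ((θ : ℝ) : AddCircle (2 * π)) := by
    funext n
    rw [smul_eq_mul, mul_comm, hc_def]
    congr 1
    rw [fourier_coe_apply, ← Complex.exp_int_mul]
    congr 1
    have hπ : (π : ℂ) ≠ 0 := Complex.ofReal_ne_zero.mpr Real.pi_ne_zero
    field_simp
    push_cast
    ring
  rw [hfun]
  exact hpt

theorem stmt15 (p : ℕ) (hp : 1 ≤ p) (F : Set ℂ) (hF : F ⊆ {z : ℂ | ‖z‖ = 1})
    (hFc : IsClosed F) (hFne : F ≠ {z : ℂ | ‖z‖ = 1})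
    (l0 : ℂ) (hl0 : ‖l0‖ = 1) (hl0F : l0 ∉ F) :
    ∃ c : ℤ → ℂ, Summable (fun n => ‖c n‖) ∧
      (∀ l ∈ F, HasSum (fun n : ℤ => l ^ n * c n) 0) ∧
      HasSum (fun n : ℤ => l0 ^ n * c n) 1 := by
  obtain ⟨ε, hε, hball⟩ : ∃ ε > 0, Metric.ball l0 ε ⊆ Fᶜ :=
    Metric.isOpen_iff.mp hFc.isOpen_compl l0 hl0F
  have hc := Real.continuous_cos.continuousAt (x := 0)
  rw [Metric.continuousAt_iff] at hc
  obtain ⟨δ₁, hδ₁, hδ₁'⟩ := hc (ε ^ 2 / 2) (by positivity)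
  set δ : ℝ := min (δ₁ / 2) π with hδ_def
  have hδpos : 0 < δ := lt_min (by linarith) Real.pi_pos
  have hδπ : δ ≤ π := min_le_right _ _
  have hcosδ : 1 - ε ^ 2 / 2 < Real.cos δ := by
    have h1 : dist δ 0 < δ₁ := by
      rw [Real.dist_eq, sub_zero, abs_of_pos hδpos]
      calc δ ≤ δ₁ / 2 := min_le_left _ _
        _ < δ₁ := by linarith
    have h2 := hδ₁' h1
    rw [Real.dist_eq, Real.cos_zero] at h2
    have h3 := abs_lt.mp h2
    linarith [h3.1]
  have hcosδ1 : Real.cos δ < 1 := by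
    rcases lt_or_eq_of_le (Real.cos_le_one δ) with h | h
    · exact h
    · exfalso
      have := (Real.cos_eq_one_iff_of_lt_of_lt
        (by linarith [Real.pi_pos] : -(2 * π) < δ)
        (by linarith [Real.pi_pos] : δ < 2 * π)).mp h
      linarith
  set θ₀ := Complex.arg l0 with hθ₀
  set f : ℝ → ℝ :=
    fun θ => Real.smoothTransition ((Real.cos (θ - θ₀) - Real.cos δ) / (1 - Real.cos δ))
    with hf_def
  have hfs : ContDiff ℝ ((⊤ : ℕ∞)) f := by
    apply Real.smoothTransition.contDiff.comp
    exact ((Real.contDiff_cos.comp (contDiff_id.sub contDiff_const)).sub contDiff_const).div_const _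
  have hfper : Function.Periodic f (2 * π) := by
    intro x
    simp only [hf_def]
    congr 3
    rw [show x + 2 * π - θ₀ = (x - θ₀) + 2 * π by ring, Real.cos_add_two_pi]
  obtain ⟨c, hc1, hc2⟩ := aux_key f hfs hfper
  have hexp0 : Complex.exp ((θ₀ : ℝ) * Complex.I) = l0 := by
    have h := Complex.norm_mul_exp_arg_mul_I l0
    rwa [hl0, Complex.ofReal_one, one_mul] at h
  refine ⟨c, hc1, ?_, ?_⟩
  · intro l hl
    have hln : ‖l‖ = 1 := hF hl
    have hexp : Complex.exp ((Complex.arg l : ℝ) * Complex.I) = l := by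
      have h := Complex.norm_mul_exp_arg_mul_I l
      rwa [hln, Complex.ofReal_one, one_mul] at h
    have hf0 : f (Complex.arg l) = 0 := by
      by_contra h0
      have hpos : 0 < (Real.cos (Complex.arg l - θ₀) - Real.cos δ) / (1 - Real.cos δ) := by
        rcases lt_or_ge 0 ((Real.cos (Complex.arg l - θ₀) - Real.cos δ) / (1 - Real.cos δ))
          with h | h
        · exact h
        · exact absurd (Real.smoothTransition.zero_of_nonpos h) h0
      have hcosgt : Real.cos δ < Real.cos (Complex.arg l - θ₀) := by
        by_contra hle
        push_neg at hle
        have hnp : (Real.cos (Complex.arg l - θ₀) - Real.cos δ) / (1 - Real.cos δ) ≤ 0 :=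
          div_nonpos_of_nonpos_of_nonneg (by linarith) (by linarith)
        linarith
      have hdist : ‖l - l0‖ ^ 2 < ε ^ 2 := by
        have hid := aux_norm_exp_sub (Complex.arg l) θ₀
        rw [hexp, hexp0] at hid
        rw [hid]
        nlinarith [hcosgt, hcosδ]
      have hmem : l ∈ Metric.ball l0 ε := by
        rw [Metric.mem_ball, dist_eq_norm]
        nlinarith [norm_nonneg (l - l0), hdist]
      exact hball hmem hl
    have h := hc2 (Complex.arg l)
    rw [hexp, hf0] at h
    simpa using h
  · have hf1 : f θ₀ = 1 := by
      simp only [hf_def]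
      rw [sub_self, Real.cos_zero]
      rw [div_self (by linarith : (1 : ℝ) - Real.cos δ ≠ 0)]
      exact Real.smoothTransition.one_of_one_le le_rfl
    have h := hc2 θ₀
    rw [hexp0, hf1] at h
    simpa using h
end

section
/- Let X be a compact Hausdorff space, σ a homeomorphism, x a point of exact period p, and for λ ∈ 𝕋 let P_{x,λ} = Ker(π_{x,λ}) ⊆ ℓ¹(Σ), where π_{x,λ} is the p-dimensional irreducible representation associated with x and λ. Then for a = Σ_n f_n δ^n ∈ ℓ¹(Σ): a ∈ ⋂_{λ∈𝕋} P_{x,λ} if and only if f_n vanishes on the orbit {x, σx, …, σ^{p−1}x} for all n ∈ ℤ. -/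
/-- The cyclic `p × p` matrix sending `e_j ↦ e_{j+1}` for `j ≤ p-2` and `e_{p-1} ↦ lam • e_0`. -/
def cyc (p : ℕ) (lam : ℂ) : Matrix (Fin p) (Fin p) ℂ :=
  fun i j =>
    if (i : ℕ) = ((j : ℕ) + 1) % p then (if (j : ℕ) = p - 1 then lam else 1) else 0

/-- Integer powers of a (presumed invertible) matrix. -/
noncomputable def zpowM (p : ℕ) (A : Matrix (Fin p) (Fin p) ℂ) (n : ℤ) :
    Matrix (Fin p) (Fin p) ℂ :=
  if 0 ≤ n then A ^ n.toNat else A⁻¹ ^ (-n).toNat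

section FourierInj
open MeasureTheory Real Complex

lemma fourier_inj (c : ℤ → ℂ) (hc : Summable fun l => ‖c l‖)
    (h : ∀ lam : ℂ, ‖lam‖ = 1 → ∑' l : ℤ, c l * lam ^ l = 0) (m : ℤ) : c m = 0 := by
  set μ : Measure ℝ := volume.restrict (Set.Ioc (0:ℝ) (2*π)) with hμ
  set F : ℤ → ℝ → ℂ := fun l θ => c l * Complex.exp (((l - m : ℤ) : ℂ) * I * θ) with hF
  have hw : ∀ θ : ℝ, ∀ l : ℤ, Complex.exp (((l - m : ℤ) : ℂ) * I * θ)
      = Complex.exp (θ * I) ^ l * Complex.exp (θ * I) ^ (-m) := by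
    intro θ l
    rw [← zpow_add₀ (Complex.exp_ne_zero _)]
    rw [← Complex.exp_int_mul]
    ring_nf
  have hzero : ∀ θ : ℝ, ∑' l : ℤ, F l θ = 0 := by
    intro θ
    have hn : ‖Complex.exp ((θ:ℂ) * I)‖ = 1 := by
      simpa using Complex.abs_exp_ofReal_mul_I θ
    calc ∑' l : ℤ, F l θ
        = (∑' l : ℤ, c l * Complex.exp ((θ:ℂ) * I) ^ l) * Complex.exp ((θ:ℂ) * I) ^ (-m) := by
          rw [← tsum_mul_right]; congr 1; funext l; rw [hF]; simp only; rw [hw θ l]; ring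
      _ = 0 := by rw [h _ hn, zero_mul]
  have hint : ∀ l : ℤ, Integrable (F l) μ := by
    intro l
    rw [hμ]
    apply Continuous.integrableOn_Ioc
    fun_prop
  have hnorm : ∀ l θ, ‖F l θ‖ = ‖c l‖ := by
    intro l θ
    have h1 : ‖Complex.exp (((l - m : ℤ) : ℂ) * I * θ)‖ = 1 := by
      rw [show (((l - m : ℤ) : ℂ) * I * θ) = (((((l - m : ℤ) : ℝ) * θ : ℝ)) : ℂ) * I by push_cast; ring]
      rw [Complex.norm_exp_ofReal_mul_I]
    rw [hF]; simp only [norm_mul, h1, mul_one]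
  have hsum2 : Summable fun l => ∫ θ, ‖F l θ‖ ∂μ := by
    have : (fun l => ∫ θ, ‖F l θ‖ ∂μ) = fun l => (2*π) * ‖c l‖ := by
      funext l
      simp only [hnorm]
      rw [integral_const, hμ]
      simp [Measure.restrict_apply, Real.volume_Ioc, smul_eq_mul, Real.pi_nonneg,
        ENNReal.toReal_ofReal (by positivity : (0:ℝ) ≤ 2*π)]
    rw [this]
    exact hc.mul_left _
  have key : HasSum (fun l => ∫ θ, F l θ ∂μ) 0 := by
    have := MeasureTheory.hasSum_integral_of_summable_integral_norm hint hsum2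
    simpa [hzero] using this
  -- compute each integral
  have hI : ∀ l : ℤ, ∫ θ, F l θ ∂μ = if l = m then (2*π) * c m else 0 := by
    intro l
    rw [hμ, hF]
    simp only
    rw [MeasureTheory.integral_const_mul]
    by_cases hl : l = m
    · subst hl
      simp [Real.volume_Ioc, ENNReal.toReal_ofReal (by positivity : (0:ℝ) ≤ 2*π)]
      rw [max_eq_left (by positivity)]
      push_cast
      ring
    · have hk : ((l - m : ℤ) : ℂ) * I ≠ 0 := by
        simp only [ne_eq, mul_eq_zero, Complex.I_ne_zero, or_false]
        exact_mod_cast sub_ne_zero.2 hl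
      have := integral_exp_mul_complex (a := 0) (b := 2*π) hk
      rw [intervalIntegral.integral_of_le (by positivity : (0:ℝ) ≤ 2*π)] at this
      rw [this]
      have h2 : ((l - m : ℤ) : ℂ) * I * (2*π : ℝ) = (l - m : ℤ) * (2 * π * I) := by
        push_cast; ring
      rw [h2, Complex.exp_int_mul_two_pi_mul_I]
      simp [hl]
  have : (2*π) * c m = 0 := by
    have := key.tsum_eq
    rw [tsum_congr hI] at this
    rwa [tsum_ite_eq] at this
  have hpi : (2*π : ℂ) ≠ 0 := by
    simp only [ne_eq, mul_eq_zero, OfNat.ofNat_ne_zero, false_or]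
    exact_mod_cast Real.pi_ne_zero
  rcases mul_eq_zero.mp this with h1 | h2
  · exact absurd h1 hpi
  · exact h2

end FourierInj

noncomputable def ent (p : ℕ) (lam : ℂ) (n : ℤ) : Matrix (Fin p) (Fin p) ℂ :=
  fun i j => if (p:ℤ) ∣ (n + (j:ℤ) - (i:ℤ)) then lam ^ ((n + (j:ℤ) - (i:ℤ)) / (p:ℤ)) else 0

lemma ent_zero (p : ℕ) (lam : ℂ) : ent p lam 0 = 1 := by
  funext i j
  simp only [ent, zero_add]
  by_cases hij : i = j
  · subst hij
    simp [Matrix.one_apply]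
  · have h1 : ¬ (p:ℤ) ∣ ((j:ℤ) - (i:ℤ)) := by
      intro hdvd
      have hlt : |((j:ℤ) - (i:ℤ))| < p := by
        have := j.isLt; have := i.isLt
        rw [abs_lt]; omega
      have := Int.eq_zero_of_abs_lt_dvd hdvd hlt
      have : (j:ℤ) = (i:ℤ) := by omega
      exact hij (by exact_mod_cast (Fin.ext (by omega) : i = j))
    rw [if_neg h1, Matrix.one_apply_ne hij]

lemma ent_mul_cyc (p : ℕ) (hp : 1 ≤ p) (lam : ℂ) (hlam : lam ≠ 0) (n : ℤ) :
    ent p lam n * cyc p lam = ent p lam (n + 1) := by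
  funext i j
  rw [Matrix.mul_apply]
  have hk0lt : ((j:ℕ) + 1) % p < p := Nat.mod_lt _ hp
  set k₀ : Fin p := ⟨((j:ℕ) + 1) % p, hk0lt⟩ with hk₀
  rw [Finset.sum_eq_single_of_mem k₀ (Finset.mem_univ _) (by
    intro k _ hk
    have : ¬ ((k:ℕ) = ((j:ℕ) + 1) % p) := by
      intro hkk
      exact hk (Fin.ext (by simpa using hkk))
    simp [cyc, this])]
  have hcyc : cyc p lam k₀ j = if (j:ℕ) = p - 1 then lam else 1 := by
    simp [cyc, hk₀]
  rw [hcyc]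
  by_cases hj : (j:ℕ) = p - 1
  · have hk0 : ((k₀:Fin p):ℕ) = 0 := by
      show ((j:ℕ) + 1) % p = 0
      rw [hj, Nat.sub_add_cancel hp, Nat.mod_self]
    rw [if_pos hj]
    have hcast : ((k₀:Fin p):ℤ) = 0 := by exact_mod_cast hk0
    simp only [ent, hcast]
    have harith : (n + 1 + (j:ℤ) - (i:ℤ)) = (n + 0 - (i:ℤ)) + p := by
      have : ((j:ℕ):ℤ) = (p:ℤ) - 1 := by omega
      omega
    by_cases hdvd : (p:ℤ) ∣ (n + 0 - (i:ℤ))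
    · obtain ⟨q, hq⟩ := hdvd
      have hdvd2 : (p:ℤ) ∣ (n + 1 + (j:ℤ) - (i:ℤ)) := by rw [harith, hq]; exact ⟨q+1, by ring⟩
      rw [if_pos ⟨q, hq⟩, if_pos hdvd2]
      have hp0 : (p:ℤ) ≠ 0 := by exact_mod_cast Nat.one_le_iff_ne_zero.mp hp
      have e1 : (n + 0 - (i:ℤ)) / p = q := by rw [hq, Int.mul_ediv_cancel_left _ hp0]
      have e2 : (n + 1 + (j:ℤ) - (i:ℤ)) / p = q + 1 := by
        rw [harith, hq, show (p:ℤ)*q + p = p * (q+1) by ring, Int.mul_ediv_cancel_left _ hp0]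
      rw [e1, e2, zpow_add_one₀ hlam]
    · have hdvd2 : ¬ (p:ℤ) ∣ (n + 1 + (j:ℤ) - (i:ℤ)) := by
        rw [harith]; intro ⟨q, hq⟩; exact hdvd ⟨q - 1, by linarith⟩
      rw [if_neg hdvd, if_neg hdvd2, zero_mul]
  · have hjlt : (j:ℕ) + 1 < p := by have := j.isLt; omega
    have hk0 : ((k₀:Fin p):ℕ) = (j:ℕ) + 1 := by simp [hk₀, Nat.mod_eq_of_lt hjlt]
    have hcast : ((k₀:Fin p):ℤ) = (j:ℤ) + 1 := by exact_mod_cast hk0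
    rw [if_neg hj, mul_one]
    simp only [ent, hcast]
    have : n + ((j:ℤ) + 1) - (i:ℤ) = n + 1 + (j:ℤ) - (i:ℤ) := by ring
    rw [this]

lemma entneg_mul_cyc (p : ℕ) (hp : 1 ≤ p) (lam : ℂ) (hlam : lam ≠ 0) :
    ent p lam (-1) * cyc p lam = 1 := by
  rw [ent_mul_cyc p hp lam hlam, neg_add_cancel, ent_zero]

lemma cyc_inv (p : ℕ) (hp : 1 ≤ p) (lam : ℂ) (hlam : lam ≠ 0) :
    (cyc p lam)⁻¹ = ent p lam (-1) :=
  Matrix.inv_eq_left_inv (entneg_mul_cyc p hp lam hlam)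

lemma cyc_mul_entneg (p : ℕ) (hp : 1 ≤ p) (lam : ℂ) (hlam : lam ≠ 0) :
    cyc p lam * ent p lam (-1) = 1 :=
  mul_eq_one_comm.mp (entneg_mul_cyc p hp lam hlam)

lemma ent_mul_entneg (p : ℕ) (hp : 1 ≤ p) (lam : ℂ) (hlam : lam ≠ 0) (n : ℤ) :
    ent p lam n * ent p lam (-1) = ent p lam (n - 1) := by
  have h1 : ent p lam n = ent p lam (n - 1) * cyc p lam := by
    rw [ent_mul_cyc p hp lam hlam, sub_add_cancel]
  rw [h1, mul_assoc, cyc_mul_entneg p hp lam hlam, mul_one]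

lemma cyc_pow (p : ℕ) (hp : 1 ≤ p) (lam : ℂ) (hlam : lam ≠ 0) (m : ℕ) :
    cyc p lam ^ m = ent p lam m := by
  induction m with
  | zero => simp [ent_zero]
  | succ k ih =>
      rw [pow_succ, ih, ent_mul_cyc p hp lam hlam]
      norm_cast

lemma cyc_inv_pow (p : ℕ) (hp : 1 ≤ p) (lam : ℂ) (hlam : lam ≠ 0) (m : ℕ) :
    (cyc p lam)⁻¹ ^ m = ent p lam (-m) := by
  induction m with
  | zero => simp [ent_zero]
  | succ k ih =>
      rw [pow_succ, ih, cyc_inv p hp lam hlam, ent_mul_entneg p hp lam hlam]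
      push_cast
      ring_nf

lemma zpowM_eq_ent (p : ℕ) (hp : 1 ≤ p) (lam : ℂ) (hlam : lam ≠ 0) (n : ℤ) :
    zpowM p (cyc p lam) n = ent p lam n := by
  rw [zpowM]
  by_cases hn : 0 ≤ n
  · rw [if_pos hn, cyc_pow p hp lam hlam, Int.toNat_of_nonneg hn]
  · rw [if_neg hn, cyc_inv_pow p hp lam hlam]
    have h2 : (((-n).toNat : ℕ) : ℤ) = -n := Int.toNat_of_nonneg (by omega)
    rw [h2, neg_neg]

lemma ent_norm_le (p : ℕ) (lam : ℂ) (hlam : ‖lam‖ = 1) (n : ℤ) (i j : Fin p) :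
    ‖ent p lam n i j‖ ≤ 1 := by
  rw [ent]
  split
  · rw [norm_zpow, hlam, one_zpow]
  · simp

lemma main_aux (p : ℕ) (hp : 1 ≤ p) (g : ℤ → Fin p → ℂ) (b : ℤ → ℝ)
    (hb : ∀ n i, ‖g n i‖ ≤ b n) (hsb : Summable b)
    (H : ∀ lam : ℂ, ‖lam‖ = 1 →
      (∑' n : ℤ, Matrix.diagonal (g n) * zpowM p (cyc p lam) n) = 0)
    (n₀ : ℤ) (j : Fin p) : g n₀ j = 0 := by
  classical
  have hp0 : (p:ℤ) ≠ 0 := by exact_mod_cast Nat.one_le_iff_ne_zero.mp hp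
  have hppos : (0:ℤ) < p := by exact_mod_cast hp
  have hmodnn : 0 ≤ ((j:ℤ) - n₀) % p := Int.emod_nonneg _ hp0
  have hmodlt : ((j:ℤ) - n₀) % p < p := Int.emod_lt_of_pos _ hppos
  set j' : Fin p := ⟨(((j:ℤ) - n₀) % p).toNat, by omega⟩ with hj'
  have hj'cast : ((j':Fin p):ℤ) = ((j:ℤ) - n₀) % p := by
    simp [hj', Int.toNat_of_nonneg hmodnn]
  set e : ℤ → ℤ := fun l => (j:ℤ) - (j':ℤ) + p * l with he
  have he_inj : Function.Injective e := by
    intro a b hab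
    simp only [he] at hab
    exact mul_left_cancel₀ hp0 (by linarith)
  have key : ∀ lam : ℂ, ‖lam‖ = 1 → ∑' l : ℤ, (g (e l) j) * lam ^ l = 0 := by
    intro lam hlam
    have hlam0 : lam ≠ 0 := by
      intro h0; rw [h0] at hlam; simp at hlam
    have H0 : (∑' n : ℤ, Matrix.diagonal (g n) * ent p lam n) = 0 := by
      rw [← H lam hlam]
      exact tsum_congr fun n => by rw [zpowM_eq_ent p hp lam hlam0]
    set M : ℤ → Matrix (Fin p) (Fin p) ℂ := fun n => Matrix.diagonal (g n) * ent p lam n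
      with hM
    have hMapp : ∀ n (i k : Fin p), M n i k = g n i * ent p lam n i k := by
      intro n i k
      rw [hM]
      exact Matrix.diagonal_mul _ _ _ _
    have hMsum : ∀ (i k : Fin p), Summable fun n => M n i k := by
      intro i k
      apply Summable.of_norm_bounded hsb
      intro n
      rw [hMapp, norm_mul]
      calc ‖g n i‖ * ‖ent p lam n i k‖ ≤ ‖g n i‖ * 1 :=
            mul_le_mul_of_nonneg_left (ent_norm_le p lam hlam n i k) (norm_nonneg _)
        _ ≤ b n := by rw [mul_one]; exact hb n i
    have hMsum' : Summable M := Pi.summable.2 fun i => Pi.summable.2 (hMsum i)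
    have hentry : ∑' n : ℤ, M n j j' = 0 := by
      rw [← tsum_apply (Pi.summable.1 hMsum' j), ← tsum_apply hMsum']
      exact congrFun (congrFun H0 j) j'
    rw [← hentry]
    refine he_inj.tsum_eq ?_ |>.trans (tsum_congr fun n => rfl) |>.symm.trans ?_ |>.symm
    · -- support ⊆ range e
      intro n hn
      simp only [Function.mem_support, Ne] at hn
      by_contra hnr
      apply hn
      rw [hMapp]
      have hnd : ¬ (p:ℤ) ∣ (n + (j':ℤ) - (j:ℤ)) := by
        intro ⟨q, hq⟩
        exact hnr ⟨q, by simp only [he]; omega⟩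
      rw [ent, if_neg hnd, mul_zero]
    · -- ∑' l, M (e l) j j' = ∑' l, g (e l) j * lam ^ l
      refine tsum_congr fun l => ?_
      rw [hMapp]
      congr 1
      have harg : e l + (j':ℤ) - (j:ℤ) = p * l := by simp only [he]; ring
      rw [ent, harg, if_pos ⟨l, rfl⟩, Int.mul_ediv_cancel_left _ hp0]
  have hcsum : Summable fun l => ‖g (e l) j‖ :=
    Summable.of_nonneg_of_le (fun l => norm_nonneg _) (fun l => hb (e l) j)
      (hsb.comp_injective he_inj)
  have hall := fourier_inj _ hcsum key
  have hdvd : (p:ℤ) ∣ (n₀ - (j:ℤ) + (j':ℤ)) := by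
    rw [hj'cast]
    refine ⟨-(((j:ℤ) - n₀) / p), ?_⟩
    have := Int.mul_ediv_add_emod ((j:ℤ) - n₀) p
    linarith
  have hem : e ((n₀ - (j:ℤ) + (j':ℤ)) / p) = n₀ := by
    simp only [he]
    rw [Int.mul_ediv_cancel' hdvd]
    ring
  have := hall ((n₀ - (j:ℤ) + (j':ℤ)) / p)
  rwa [hem] at this

theorem stmt16 {X : Type*} [TopologicalSpace X] [CompactSpace X] [T2Space X]
    (σ : X ≃ₜ X) (x : X) (p : ℕ) (hp : 1 ≤ p)
    (hper : (σ.toEquiv ^ p) x = x)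
    (hdist : Function.Injective fun j : Fin p => (σ.toEquiv ^ (j : ℕ)) x)
    (f : ℤ → C(X, ℂ)) (hf : Summable fun n => ‖f n‖) :
    (∀ lam : ℂ, ‖lam‖ = 1 →
        (∑' n : ℤ,
          Matrix.diagonal (fun j : Fin p => f n ((σ.toEquiv ^ (j : ℕ)) x)) *
            zpowM p (cyc p lam) n) = 0)
      ↔ ∀ n : ℤ, ∀ j : Fin p, f n ((σ.toEquiv ^ (j : ℕ)) x) = 0 := by
  constructor
  · intro H n₀ j
    exact main_aux p hp (fun n i => f n ((σ.toEquiv ^ (i : ℕ)) x)) (fun n => ‖f n‖)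
      (fun n i => ContinuousMap.norm_coe_le_norm _ _) hf H n₀ j
  · intro hvan lam hlam
    have : ∀ n : ℤ,
        Matrix.diagonal (fun j : Fin p => f n ((σ.toEquiv ^ (j : ℕ)) x)) *
          zpowM p (cyc p lam) n = 0 := by
      intro n
      have : (fun j : Fin p => f n ((σ.toEquiv ^ (j : ℕ)) x)) = fun _ => (0:ℂ) := by
        funext j; exact hvan n j
      rw [this, Matrix.diagonal_zero, zero_mul]
    rw [tsum_congr this, tsum_zero]
end
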